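/- Suppose the utilities u_i(j) are drawn independently from a non-atomic distribution D on [0,1], and that Σ_{p=1}^{k} n_p ≤ m and m − Σ_{p=1}^{k−1} n_p + 1 > 0. Then the probability that there exist k pairwise disjoint bundles I_1,…,I_k ⊆ I with |I_p| = n_p and I_p maximizing v_p(I') over all bundles I' of size n_p, for every p, is at least exp( − k²·(max_{p∈[k]} n_p)² / (m − Σ_{p=1}^{k−1} n_p + 1) ). -/

import Mathlib

open MeasureTheory ProbabilityTheory Filter
open scoped ENNReal

namespace ClassEF

variable {A B : Type*}

/-- A set of edges of a bipartite graph is a matching if every vertex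
appears in at most one edge. -/
def IsMatching (M : Finset (A × B)) : Prop :=
  (∀ e ∈ M, ∀ e' ∈ M, e.1 = e'.1 → e = e') ∧
  (∀ e ∈ M, ∀ e' ∈ M, e.2 = e'.2 → e = e')

/-- Total weight of a set of edges. -/
def weightSum (w : A → B → ℝ) (M : Finset (A × B)) : ℝ :=
  ∑ e ∈ M, w e.1 e.2

/-- A left vertex is covered by a matching. -/
def coveredA (M : Finset (A × B)) (a : A) : Prop := ∃ b, (a, b) ∈ M

/-- A right vertex is covered by a matching. -/
def coveredB (M : Finset (A × B)) (b : B) : Prop := ∃ a, (a, b) ∈ M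

/-- `M` is a maximum-weight matching among the matchings with `r` edges in the
(complete bipartite) subgraph induced by `A'` and `B'`. -/
def IsMaxMatchingOfSize [DecidableEq A] [DecidableEq B]
    (w : A → B → ℝ) (A' : Finset A) (B' : Finset B) (r : ℕ)
    (M : Finset (A × B)) : Prop :=
  IsMatching M ∧ M ⊆ A' ×ˢ B' ∧ M.card = r ∧
  ∀ M' : Finset (A × B), IsMatching M' → M' ⊆ A' ×ˢ B' → M'.card = r →
    weightSum w M' ≤ weightSum w M

/-- `M` is a maximum-weight matching (among matchings of arbitrary size). -/
def IsMaxWeightMatching (w : A → B → ℝ) (M : Finset (A × B)) : Prop :=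
  IsMatching M ∧ ∀ M' : Finset (A × B), IsMatching M' → weightSum w M' ≤ weightSum w M

open scoped Classical in
/-- The assignment valuation: the maximum total weight of a matching between
the agents of `Np` and the items of `S`. -/
noncomputable def vval [DecidableEq A] [DecidableEq B]
    (w : A → B → ℝ) (Np : Finset A) (S : Finset B) : ℝ :=
  ((Np ×ˢ S).powerset.filter fun M => IsMatching M).sup'
    ⟨∅, by simp [IsMatching]⟩ (weightSum w)

/-- The set of items matched to an agent of `S` under the matching `M`. -/
def bundleOf [DecidableEq A] [DecidableEq B] (M : Finset (A × B)) (S : Finset A) : Finset B :=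
  (M.filter fun e => e.1 ∈ S).image Prod.snd

/-- The total utility received by the agents of `S` under the matching `M`. -/
def classUtil [DecidableEq A] (w : A → B → ℝ) (M : Finset (A × B)) (S : Finset A) : ℝ :=
  ∑ e ∈ M.filter (fun e => e.1 ∈ S), w e.1 e.2

/-- Class envy-freeness. -/
def ClassEnvyFree [DecidableEq A] [DecidableEq B] {k : ℕ}
    (w : A → B → ℝ) (cls : Fin k → Finset A) (M : Finset (A × B)) : Prop :=
  ∀ p q : Fin k, p ≠ q → vval w (cls p) (bundleOf M (cls q)) ≤ classUtil w M (cls p)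

/-- Item `j` is wasted for the matching `M`. -/
def Wasted [DecidableEq A] [DecidableEq B] {k : ℕ}
    (w : A → B → ℝ) (cls : Fin k → Finset A) (M : Finset (A × B)) (j : B) : Prop :=
  ((∀ i : A, (i, j) ∉ M) ∧
    ∃ p, vval w (cls p) (bundleOf M (cls p)) < vval w (cls p) (insert j (bundleOf M (cls p)))) ∨
  (∃ q, j ∈ bundleOf M (cls q) ∧
    vval w (cls q) (bundleOf M (cls q)) = vval w (cls q) ((bundleOf M (cls q)).erase j) ∧
    ∃ p, p ≠ q ∧
      vval w (cls p) (bundleOf M (cls p)) < vval w (cls p) (insert j (bundleOf M (cls p))))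

/-- A matching is non-wasteful if no item is wasted. -/
def NonWasteful [DecidableEq A] [DecidableEq B] {k : ℕ}
    (w : A → B → ℝ) (cls : Fin k → Finset A) (M : Finset (A × B)) : Prop :=
  ∀ j : B, ¬ Wasted w cls M j

/-- `cls` partitions the agents into `k` disjoint nonempty classes. -/
def IsClassPartition {n k : ℕ} (cls : Fin k → Finset (Fin n)) : Prop :=
  (∀ p, (cls p).Nonempty) ∧ (∀ p q : Fin k, p ≠ q → Disjoint (cls p) (cls q)) ∧
  Finset.univ.biUnion cls = (Finset.univ : Finset (Fin n))

/-- The maximum class size. -/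
def maxClassSize {n k : ℕ} (cls : Fin k → Finset (Fin n)) : ℕ :=
  Finset.univ.sup fun p => (cls p).card

/-- The minimum class size. -/
noncomputable def minClassSize {n k : ℕ} (cls : Fin k → Finset (Fin n)) : ℕ :=
  sInf (Set.range fun p => (cls p).card)

/-- Marginal value of the item `j` for the bundle `S` of a class with agent set `Np`. -/
noncomputable def marginalVal [DecidableEq A] [DecidableEq B]
    (w : A → B → ℝ) (Np : Finset A) (S : Finset B) (j : B) : ℝ :=
  vval w Np (insert j S) - vval w Np S

/-- The items remaining once each class `p` holds the bundle `Bu p`. -/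
def remainingItems [Fintype B] [DecidableEq B] {k : ℕ} (Bu : Fin k → Finset B) : Finset B :=
  Finset.univ \ Finset.univ.biUnion Bu

/-- One selection step of class `p` in the round-robin algorithm, acting on the
tuple of current bundles: if some remaining item has positive marginal value,
class `p` adds to its bundle a remaining item of maximum marginal value;
otherwise nothing happens. -/
def ClassStep [Fintype B] [DecidableEq A] [DecidableEq B] {k : ℕ}
    (w : A → B → ℝ) (cls : Fin k → Finset A) (p : Fin k)
    (Bu Bu' : Fin k → Finset B) : Prop :=
  (∃ j ∈ remainingItems Bu,
      0 < marginalVal w (cls p) (Bu p) j ∧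
      (∀ j' ∈ remainingItems Bu,
        marginalVal w (cls p) (Bu p) j' ≤ marginalVal w (cls p) (Bu p) j) ∧
      Bu' = Function.update Bu p (insert j (Bu p))) ∨
  ((∀ j ∈ remainingItems Bu, marginalVal w (cls p) (Bu p) j ≤ 0) ∧ Bu' = Bu)

/-- One round of the round-robin algorithm: the classes `p = 0, …, k-1` perform
their selection steps in increasing order. -/
def RoundStep [Fintype B] [DecidableEq A] [DecidableEq B] {k : ℕ}
    (w : A → B → ℝ) (cls : Fin k → Finset A) (Bu Bu' : Fin k → Finset B) : Prop :=
  ∃ f : Fin (k + 1) → Fin k → Finset B,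
    f 0 = Bu ∧ f (Fin.last k) = Bu' ∧
    ∀ p : Fin k, ClassStep w cls p (f p.castSucc) (f p.succ)

/-- `M` is a possible output of the round-robin algorithm: starting from empty
bundles, rounds are performed until no class assigns positive marginal value to
any remaining item, and `M` is obtained by matching each class `p` with its final
bundle `Bu p` via a maximum-weight matching. -/
def IsRoundRobinOutput [Fintype B] [DecidableEq A] [DecidableEq B] {k : ℕ}
    (w : A → B → ℝ) (cls : Fin k → Finset A) (M : Finset (A × B)) : Prop :=
  ∃ Bu : Fin k → Finset B,
    Relation.ReflTransGen (RoundStep w cls) (fun _ => ∅) Bu ∧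
    (∀ p, ∀ j ∈ remainingItems Bu, marginalVal w (cls p) (Bu p) j ≤ 0) ∧
    IsMatching M ∧
    (∀ p : Fin k, ∀ e ∈ M, e.1 ∈ cls p → e.2 ∈ Bu p) ∧
    (∀ p : Fin k, classUtil w M (cls p) = vval w (cls p) (Bu p))

/-- An `(α,β)`-PDF-bounded distribution on `[0,1]`: it has a density bounded
between `a` and `b` on `[0,1]` and vanishing outside `[0,1]`. -/
def PDFBounded (D : Measure ℝ) (a b : ℝ) : Prop :=
  ∃ f : ℝ → ℝ,
    (∀ x ∈ Set.Icc (0 : ℝ) 1, a ≤ f x ∧ f x ≤ b) ∧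
    (∀ x, x ∉ Set.Icc (0 : ℝ) 1 → f x = 0) ∧
    D = MeasureTheory.volume.withDensity fun x => ENNReal.ofReal (f x)

/-- The reversed exponential distribution `ReExp(λ)`, with density
`λ e^{-λ(1-x)}` on `(-∞, 1]`. -/
noncomputable def reExp (lam : ℝ) : Measure ℝ :=
  MeasureTheory.volume.withDensity fun x =>
    ENNReal.ofReal (if x ≤ 1 then lam * Real.exp (-lam * (1 - x)) else 0)

/-- An acceptable alternating path of length `ℓ` for the threshold `w0`, of the
matching `Mopt`, inside the bipartite graph on right vertex set `S`: it visits
distinct matched left vertices `i 0, …, i (ℓ-1)` and ends in an unmatched right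
vertex `j'`, and all its non-matching edges have weight at least `w0`. -/
def AcceptablePath (w : A → B → ℝ) (S : Finset B)
    (Mopt : Finset (A × B)) (w0 : ℝ) (ℓ : ℕ) : Prop :=
  ∃ hℓ : 0 < ℓ, ∃ (i : Fin ℓ → A) (b : Fin ℓ → B) (j' : B),
    Function.Injective i ∧
    (∀ t, (i t, b t) ∈ Mopt) ∧
    j' ∈ S ∧ (∀ a : A, (a, j') ∉ Mopt) ∧
    (∀ t : Fin ℓ, ∀ ht : (t : ℕ) + 1 < ℓ, w0 ≤ w (i t) (b ⟨(t : ℕ) + 1, ht⟩)) ∧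
    w0 ≤ w (i ⟨ℓ - 1, Nat.sub_lt hℓ Nat.one_pos⟩) j'

/-- An acceptable alternating cycle of length `ℓ` for the threshold `w0`, of the
matching `Mopt`: it visits distinct matched left vertices `i 0, …, i (ℓ-1)` and
all its non-matching edges have weight at least `w0`. -/
def AcceptableCycle (w : A → B → ℝ)
    (Mopt : Finset (A × B)) (w0 : ℝ) (ℓ : ℕ) : Prop :=
  ∃ hℓ : 0 < ℓ, ∃ (i : Fin ℓ → A) (b : Fin ℓ → B),
    Function.Injective i ∧
    (∀ t, (i t, b t) ∈ Mopt) ∧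
    ∀ t : Fin ℓ, w0 ≤ w (i t) (b ⟨((t : ℕ) + 1) % ℓ, Nat.mod_lt _ hℓ⟩)

end ClassEF

namespace ClassEFAux

open ClassEF Finset

variable {A B : Type*} [DecidableEq A] [DecidableEq B]

theorem le_vval {w : A → B → ℝ} {Np : Finset A} {S : Finset B} {M : Finset (A × B)}
    (hM : IsMatching M) (hsub : M ⊆ Np ×ˢ S) : weightSum w M ≤ vval w Np S := by
  classical
  apply Finset.le_sup'
  simp only [Finset.mem_filter, Finset.mem_powerset]
  exact ⟨hsub, hM⟩

theorem vval_le {w : A → B → ℝ} {Np : Finset A} {S : Finset B} {c : ℝ}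
    (h : ∀ M : Finset (A × B), IsMatching M → M ⊆ Np ×ˢ S → weightSum w M ≤ c) :
    vval w Np S ≤ c := by
  classical
  apply Finset.sup'_le
  intro M hM
  simp only [Finset.mem_filter, Finset.mem_powerset] at hM
  exact h M hM.2 hM.1

theorem exists_vval_eq (w : A → B → ℝ) (Np : Finset A) (S : Finset B) :
    ∃ M : Finset (A × B), IsMatching M ∧ M ⊆ Np ×ˢ S ∧ weightSum w M = vval w Np S := by
  classical
  obtain ⟨M, hmem, heq⟩ := Finset.exists_mem_eq_sup'
    (⟨∅, by simp [IsMatching]⟩ : ((Np ×ˢ S).powerset.filter fun M => IsMatching M).Nonempty)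
    (weightSum w)
  simp only [Finset.mem_filter, Finset.mem_powerset] at hmem
  exact ⟨M, hmem.2, hmem.1, heq.symm⟩

theorem vval_congr {w w' : A → B → ℝ} {Np : Finset A} {S : Finset B}
    (h : ∀ i ∈ Np, ∀ j ∈ S, w i j = w' i j) : vval w Np S = vval w' Np S := by
  have key : ∀ M : Finset (A × B), M ⊆ Np ×ˢ S → weightSum w M = weightSum w' M := by
    intro M hsub
    refine Finset.sum_congr rfl fun e he => ?_
    have := hsub he
    rw [Finset.mem_product] at this
    exact h e.1 this.1 e.2 this.2
  apply le_antisymm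
  · refine vval_le fun M hM hsub => ?_
    rw [key M hsub]; exact le_vval hM hsub
  · refine vval_le fun M hM hsub => ?_
    rw [← key M hsub]; exact le_vval hM hsub

/-- A maximum-weight matching with all-positive weights covers all of `S`
when `S.card ≤ Np.card`. -/
theorem exists_max_cover {w : A → B → ℝ} {Np : Finset A} {S : Finset B}
    (hpos : ∀ i ∈ Np, ∀ j ∈ S, 0 < w i j) (hcard : S.card ≤ Np.card) :
    ∃ M, IsMatching M ∧ M ⊆ Np ×ˢ S ∧ weightSum w M = vval w Np S ∧
      ∀ j ∈ S, ∃ i, (i, j) ∈ M := by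
  obtain ⟨M, hM, hsub, heq⟩ := exists_vval_eq w Np S
  refine ⟨M, hM, hsub, heq, ?_⟩
  by_contra hcon
  push_neg at hcon
  obtain ⟨j, hjS, hjun⟩ := hcon
  -- snd is injective on M
  have hsnd : Set.InjOn Prod.snd M := fun e he e' he' h2 => hM.2 e he e' he' h2
  have hfst : Set.InjOn Prod.fst M := fun e he e' he' h2 => hM.1 e he e' he' h2
  have himgS : M.image Prod.snd ⊆ S.erase j := by
    intro b hb
    rw [Finset.mem_image] at hb
    obtain ⟨e, he, rfl⟩ := hb
    have h1 := hsub he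
    rw [Finset.mem_product] at h1
    refine Finset.mem_erase.2 ⟨?_, h1.2⟩
    rintro rfl
    exact hjun e.1 (by simpa using he)
  have hcard1 : M.card < Np.card := by
    have h1 : M.card = (M.image Prod.snd).card := (Finset.card_image_of_injOn hsnd).symm
    have h2 : (S.erase j).card < S.card := Finset.card_erase_lt_of_mem hjS
    have := Finset.card_le_card himgS
    omega
  have hcard2 : (M.image Prod.fst).card < Np.card := by
    rwa [Finset.card_image_of_injOn hfst]
  have himgN : M.image Prod.fst ⊆ Np := by
    intro a ha
    rw [Finset.mem_image] at ha
    obtain ⟨e, he, rfl⟩ := ha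
    have h1 := hsub he
    rw [Finset.mem_product] at h1
    exact h1.1
  obtain ⟨i, hiN, hiun⟩ : ∃ i ∈ Np, i ∉ M.image Prod.fst := by
    by_contra hc
    push_neg at hc
    have : Np ⊆ M.image Prod.fst := hc
    have := Finset.card_le_card this
    omega
  have hiun' : ∀ b, (i, b) ∉ M := by
    intro b hb
    exact hiun (Finset.mem_image.2 ⟨(i, b), hb, rfl⟩)
  have hjun' : ∀ a, (a, j) ∉ M := by
    intro a ha
    exact hjun a ha
  have hnotmem : (i, j) ∉ M := hiun' j
  set M' := insert (i, j) M with hM'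
  have hmatch' : IsMatching M' := by
    constructor
    · intro e he e' he' h1
      rcases Finset.mem_insert.1 he with rfl | he
      · rcases Finset.mem_insert.1 he' with rfl | he'
        · rfl
        · exfalso
          apply hiun' e'.2
          have : ((i, j).1, e'.2) ∈ M := by rw [h1]; simpa using he'
          simpa using this
      · rcases Finset.mem_insert.1 he' with rfl | he'
        · exfalso
          apply hiun' e.2
          have : ((i, j).1, e.2) ∈ M := by rw [← h1]; simpa using he
          simpa using this
        · exact hM.1 e he e' he' h1
    · intro e he e' he' h2
      rcases Finset.mem_insert.1 he with rfl | he
      · rcases Finset.mem_insert.1 he' with rfl | he'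
        · rfl
        · exfalso
          apply hjun' e'.1
          have : (e'.1, (i, j).2) ∈ M := by rw [h2]; simpa using he'
          simpa using this
      · rcases Finset.mem_insert.1 he' with rfl | he'
        · exfalso
          apply hjun' e.1
          have : (e.1, (i, j).2) ∈ M := by rw [← h2]; simpa using he
          simpa using this
        · exact hM.2 e he e' he' h2
  have hsub' : M' ⊆ Np ×ˢ S := by
    intro e he
    rcases Finset.mem_insert.1 he with rfl | he
    · exact Finset.mem_product.2 ⟨hiN, hjS⟩
    · exact hsub he
  have hws : weightSum w M' = w i j + weightSum w M := Finset.sum_insert hnotmem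
  have hle := le_vval (w := w) hmatch' hsub'
  have hwij : 0 < w i j := hpos i hiN j hjS
  rw [hws, heq] at hle
  linarith

/-- Existence of a strict maximizer bundle, given positivity and
pairwise-distinct matching weights. -/
theorem exists_strict_max [Fintype B] {w : A → B → ℝ} {Np : Finset A}
    (hpos : ∀ i j, 0 < w i j)
    (hdist : ∀ M M' : Finset (A × B), M ≠ M' → weightSum w M ≠ weightSum w M')
    (hcard : Np.card ≤ Fintype.card B) :
    ∃ T ∈ Finset.powersetCard Np.card (Finset.univ : Finset B),
      ∀ T' ∈ Finset.powersetCard Np.card (Finset.univ : Finset B),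
        T' ≠ T → vval w Np T' < vval w Np T := by
  classical
  have hne : (Finset.powersetCard Np.card (Finset.univ : Finset B)).Nonempty :=
    Finset.powersetCard_nonempty.2 (by simpa using hcard)
  obtain ⟨T, hT, hmax⟩ := Finset.exists_max_image _ (fun T => vval w Np T) hne
  refine ⟨T, hT, fun T' hT' hne' => ?_⟩
  rcases lt_or_eq_of_le (hmax T' hT') with h | h
  · exact h
  · exfalso
    have hcards : T.card = Np.card := (Finset.mem_powersetCard.1 hT).2
    have hcards' : T'.card = Np.card := (Finset.mem_powersetCard.1 hT').2
    obtain ⟨M, hM, hMsub, hMeq, hMcov⟩ := exists_max_cover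
      (w := w) (Np := Np) (S := T) (fun i _ j _ => hpos i j) (le_of_eq hcards)
    obtain ⟨M', hM', hMsub', hMeq', hMcov'⟩ := exists_max_cover
      (w := w) (Np := Np) (S := T') (fun i _ j _ => hpos i j) (le_of_eq hcards')
    have hMne : M ≠ M' := by
      obtain ⟨j, hjT, hjT'⟩ : ∃ j ∈ T, j ∉ T' := by
        by_contra hc
        push_neg at hc
        exact hne' (Finset.eq_of_subset_of_card_le hc (by omega)).symm
      obtain ⟨i, hij⟩ := hMcov j hjT
      intro hMM
      rw [hMM] at hij
      have := hMsub' hij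
      rw [Finset.mem_product] at this
      exact hjT' this.2
    exact hdist M M' hMne (by rw [hMeq, hMeq', h])

/-- Equivariance of `vval` under a permutation of the items. -/
theorem vval_perm_le {Np : Finset A} (w : A → B → ℝ) (σ : Equiv.Perm B) (S : Finset B) :
    vval (fun i j => w i (σ j)) Np S ≤ vval w Np (S.image σ) := by
  refine vval_le fun M hM hsub => ?_
  have hinj : Function.Injective (fun e : A × B => (e.1, σ e.2)) := by
    intro e e' h
    simp only [Prod.mk.injEq] at h
    exact Prod.ext h.1 (σ.injective h.2)
  have hws : weightSum (fun i j => w i (σ j)) M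
      = weightSum w (M.image fun e => (e.1, σ e.2)) := by
    rw [weightSum, weightSum, Finset.sum_image (fun a _ b _ h => hinj h)]
  rw [hws]
  refine le_vval ?_ ?_
  · constructor
    · intro e he e' he' h1
      rw [Finset.mem_image] at he he'
      obtain ⟨a, ha, rfl⟩ := he
      obtain ⟨a', ha', rfl⟩ := he'
      simp only at h1
      rw [hM.1 a ha a' ha' h1]
    · intro e he e' he' h2
      rw [Finset.mem_image] at he he'
      obtain ⟨a, ha, rfl⟩ := he
      obtain ⟨a', ha', rfl⟩ := he'
      simp only at h2
      rw [hM.2 a ha a' ha' (σ.injective h2)]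
  · intro e he
    rw [Finset.mem_image] at he
    obtain ⟨a, ha, rfl⟩ := he
    have := hsub ha
    rw [Finset.mem_product] at this ⊢
    exact ⟨this.1, Finset.mem_image_of_mem σ this.2⟩

theorem vval_perm {Np : Finset A} (w : A → B → ℝ) (σ : Equiv.Perm B) (S : Finset B) :
    vval (fun i j => w i (σ j)) Np S = vval w Np (S.image σ) := by
  refine le_antisymm (vval_perm_le w σ S) ?_
  have h2 := vval_perm_le (Np := Np) (fun i j => w i (σ j)) σ.symm (S.image σ)
  have h3 : (fun i j => w i (σ (σ.symm j))) = w := by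
    funext i j; rw [Equiv.apply_symm_apply]
  have h4 : (S.image σ).image σ.symm = S := by
    rw [Finset.image_image]
    have : (⇑σ.symm ∘ ⇑σ) = id := by funext x; simp
    rw [this, Finset.image_id]
  rw [h3, h4] at h2
  exact h2

/-- A permutation mapping one finset onto another of the same cardinality. -/
theorem exists_perm_image [Fintype B] {T T' : Finset B} (h : T.card = T'.card) :
    ∃ σ : Equiv.Perm B, T.image σ = T' := by
  classical
  have h1 : Fintype.card {x // x ∈ T} = Fintype.card {x // x ∈ T'} := by
    simp [Fintype.card_coe, h]
  have h2 : Fintype.card {x // ¬ x ∈ T} = Fintype.card {x // ¬ x ∈ T'} := by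
    rw [Fintype.card_subtype_compl, Fintype.card_subtype_compl, h1]
  let e1 : {x // x ∈ T} ≃ {x // x ∈ T'} := Fintype.equivOfCardEq h1
  let e2 : {x // ¬ x ∈ T} ≃ {x // ¬ x ∈ T'} := Fintype.equivOfCardEq h2
  refine ⟨Equiv.subtypeCongr e1 e2, ?_⟩
  have hmap : ∀ x ∈ T, Equiv.subtypeCongr e1 e2 x ∈ T' := by
    intro x hx
    have : Equiv.subtypeCongr e1 e2 x = (e1 ⟨x, hx⟩ : B) := by
      simp [Equiv.subtypeCongr, hx]
    rw [this]
    exact (e1 ⟨x, hx⟩).2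
  apply Finset.eq_of_subset_of_card_le
  · intro y hy
    rw [Finset.mem_image] at hy
    obtain ⟨x, hx, rfl⟩ := hy
    exact hmap x hx
  · rw [Finset.card_image_of_injective _ (Equiv.injective _), h]

end ClassEFAux


open MeasureTheory ProbabilityTheory Filter Finset
open scoped ENNReal

namespace ClassEFAux

variable {n m : ℕ}

abbrev ESp (n m : ℕ) := Fin n × Fin m → ℝ

noncomputable def PP (n m : ℕ) (D : Measure ℝ) : Measure (ESp n m) :=
  Measure.pi fun _ => D

instance (D : Measure ℝ) [IsProbabilityMeasure D] : IsProbabilityMeasure (PP n m D) := by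
  unfold PP; infer_instance

theorem measurable_sup'' {α ι : Type*} [MeasurableSpace α] (s : Finset ι) (hs : s.Nonempty)
    (f : ι → α → ℝ) (hf : ∀ i, Measurable (f i)) :
    Measurable fun a => s.sup' hs fun i => f i a := by
  induction hs using Finset.Nonempty.cons_induction with
  | singleton i => simpa using hf i
  | cons i s his hsne ih =>
    have h1 : (fun a => (Finset.cons i s his).sup' (Finset.cons_nonempty his) fun i => f i a)
        = fun a => max (f i a) (s.sup' hsne fun i => f i a) := by
      funext a
      rw [Finset.sup'_cons hsne]
    rw [h1]
    exact (hf i).max ih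

theorem PP_eval (D : Measure ℝ) [IsProbabilityMeasure D] (e : Fin n × Fin m)
    {s : Set ℝ} (hs : MeasurableSet s) :
    PP n m D ((fun u : ESp n m => u e) ⁻¹' s) = D s := by
  classical
  have h1 : ((fun u : ESp n m => u e) ⁻¹' s)
      = Set.pi Set.univ (fun e' => if e' = e then s else Set.univ) := by
    ext u
    simp only [Set.mem_preimage, Set.mem_pi, Set.mem_univ, forall_true_left]
    constructor
    · intro h e'; by_cases he : e' = e
      · subst he; simp [h]
      · simp [he]
    · intro h; have := h e; simpa using this
  rw [h1, PP, Measure.pi_pi]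
  rw [Finset.prod_eq_single e (fun e' _ he' => by simp [he']) (by simp)]
  simp

theorem PP_map_eval (D : Measure ℝ) [IsProbabilityMeasure D] (e : Fin n × Fin m) :
    (PP n m D).map (fun u : ESp n m => u e) = D := by
  refine Measure.ext fun s hs => ?_
  rw [Measure.map_apply (measurable_pi_apply e) hs, PP_eval D e hs]

theorem iIndepFun_coords (D : Measure ℝ) [IsProbabilityMeasure D] :
    iIndepFun (m := fun _ => (inferInstance : MeasurableSpace ℝ))
      (fun (e : Fin n × Fin m) (u : ESp n m) => u e) (PP n m D) := by
  classical
  rw [iIndepFun_iff_measure_inter_preimage_eq_mul]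
  intro S sets hsets
  have h1 : (⋂ e ∈ S, (fun u : ESp n m => u e) ⁻¹' sets e)
      = Set.pi Set.univ (fun e => if e ∈ S then sets e else Set.univ) := by
    ext u
    simp only [Set.mem_iInter, Set.mem_preimage, Set.mem_pi, Set.mem_univ, forall_true_left]
    constructor
    · intro h e; by_cases he : e ∈ S
      · rw [if_pos he]; exact h e he
      · rw [if_neg he]; trivial
    · intro h e he; have := h e; rwa [if_pos he] at this
  rw [h1, PP, Measure.pi_pi]
  calc (∏ e : Fin n × Fin m, D (if e ∈ S then sets e else Set.univ))
      = ∏ e ∈ S, D (if e ∈ S then sets e else Set.univ) :=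
        (Finset.prod_subset (Finset.subset_univ S)
          (fun e _ he => by rw [if_neg he]; exact measure_univ)).symm
    _ = ∏ e ∈ S, D (sets e) := Finset.prod_congr rfl fun e he => by rw [if_pos he]
    _ = ∏ e ∈ S, PP n m D ((fun u : ESp n m => u e) ⁻¹' sets e) :=
        Finset.prod_congr rfl fun e he => (PP_eval D e (hsets e he)).symm

noncomputable def permMap (n m : ℕ) (σ : Equiv.Perm (Fin m)) : ESp n m → ESp n m :=
  fun u e => u (e.1, σ e.2)

theorem permMap_measurePreserving (D : Measure ℝ) [IsProbabilityMeasure D]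
    (σ : Equiv.Perm (Fin m)) :
    MeasurePreserving (permMap n m σ) (PP n m D) (PP n m D) := by
  let eα : (Fin n × Fin m) ≃ (Fin n × Fin m) := Equiv.prodCongr (Equiv.refl _) σ
  have h := measurePreserving_arrowCongr' (fun _ : Fin n × Fin m => D)
      (fun _ : Fin n × Fin m => D) eα.symm (MeasurableEquiv.refl ℝ)
      (fun _ => MeasurePreserving.id D)
  have heq : ⇑(MeasurableEquiv.arrowCongr' eα.symm (MeasurableEquiv.refl ℝ)) = permMap n m σ := by
    funext u
    funext e
    simp [MeasurableEquiv.arrowCongr', Equiv.arrowCongr', Equiv.arrowCongr, permMap, eα,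
      Prod.map]
  rw [heq] at h
  exact h

theorem measure_sum_eq_aux (D : Measure ℝ) [IsProbabilityMeasure D]
    (hatom : ∀ x : ℝ, D {x} = 0) {E1 E2 : Finset (Fin n × Fin m)}
    {e0 : Fin n × Fin m} (hmem : e0 ∈ E1) (hnot : e0 ∉ E2) :
    PP n m D {u : ESp n m | ∑ e ∈ E1, u e = ∑ e ∈ E2, u e} = 0 := by
  classical
  set T : Finset (Fin n × Fin m) := Finset.univ.erase e0 with hT
  set X : ESp n m → ℝ := fun u => u e0 with hX
  set Y : ESp n m → ({x // x ∈ T} → ℝ) := fun u (i : {x // x ∈ T}) => u i with hY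
  have hYmeas : Measurable Y := measurable_pi_lambda _ fun i => measurable_pi_apply _
  have hXmeas : Measurable X := measurable_pi_apply _
  have hIndep0 := (iIndepFun_coords D).indepFun_finset {e0} T
    (by simp [hT]) (fun e => measurable_pi_apply e)
  have hIndep : IndepFun X Y (PP n m D) := by
    have := hIndep0.comp (φ := fun v : {x // x ∈ ({e0} : Finset (Fin n × Fin m))} → ℝ =>
      v ⟨e0, Finset.mem_singleton_self e0⟩) (ψ := id) (measurable_pi_apply _ : Measurable fun v : {x // x ∈ ({e0} : Finset (Fin n × Fin m))} → ℝ =>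
      v ⟨e0, Finset.mem_singleton_self e0⟩) measurable_id
    exact this
  set ext0 : ({x // x ∈ T} → ℝ) → ESp n m :=
    fun v e => if h : e ∈ T then v ⟨e, h⟩ else 0 with hext0
  set g : ({x // x ∈ T} → ℝ) → ℝ :=
    fun v => (∑ e ∈ E2, ext0 v e) - ∑ e ∈ E1.erase e0, ext0 v e with hg
  have hext0meas : ∀ e, Measurable fun v : {x // x ∈ T} → ℝ => ext0 v e := by
    intro e
    by_cases h : e ∈ T
    · simpa [ext0, h] using measurable_pi_apply (⟨e, h⟩ : (T : Finset (Fin n × Fin m)))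
    · simpa [ext0, h] using measurable_const
  have hgmeas : Measurable g :=
    (Finset.measurable_sum _ fun e _ => hext0meas e).sub
      (Finset.measurable_sum _ fun e _ => hext0meas e)
  have hmemT : ∀ e : Fin n × Fin m, e ≠ e0 → e ∈ T := by
    intro e he; simp [hT, he]
  have hgY : ∀ u : ESp n m, g (Y u) = (∑ e ∈ E2, u e) - ∑ e ∈ E1.erase e0, u e := by
    intro u
    have h2 : ∀ e ∈ E2, ext0 (Y u) e = u e := by
      intro e he
      have : e ≠ e0 := fun h => hnot (h ▸ he)
      simp [ext0, hmemT e this, Y]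
    have h1 : ∀ e ∈ E1.erase e0, ext0 (Y u) e = u e := by
      intro e he
      have : e ≠ e0 := (Finset.mem_erase.1 he).1
      simp [ext0, hmemT e this, Y]
    simp only [hg]
    rw [Finset.sum_congr rfl h2, Finset.sum_congr rfl h1]
  set s : Set (ℝ × ({x // x ∈ T} → ℝ)) := {p | p.1 = g p.2} with hs
  have hsmeas : MeasurableSet s :=
    measurableSet_eq_fun measurable_fst (hgmeas.comp measurable_snd)
  have hsetEq : {u : ESp n m | ∑ e ∈ E1, u e = ∑ e ∈ E2, u e}
      = (fun u => (X u, Y u)) ⁻¹' s := by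
    ext u
    simp only [Set.mem_setOf_eq, Set.mem_preimage, hs, Set.mem_setOf_eq]
    rw [hgY u]
    have hsum : ∑ e ∈ E1, u e = u e0 + ∑ e ∈ E1.erase e0, u e :=
      (Finset.add_sum_erase E1 (fun e => u e) hmem).symm
    rw [hsum]
    constructor
    · intro h; simp only [X]; linarith
    · intro h; simp only [X] at h; linarith
  rw [hsetEq]
  have hmap : (PP n m D).map (fun u => (X u, Y u))
      = ((PP n m D).map X).prod ((PP n m D).map Y) :=
    (indepFun_iff_map_prod_eq_prod_map_map hXmeas.aemeasurable hYmeas.aemeasurable).1 hIndep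
  have : PP n m D ((fun u => (X u, Y u)) ⁻¹' s)
      = (((PP n m D).map X).prod ((PP n m D).map Y)) s := by
    rw [← hmap, Measure.map_apply (hXmeas.prodMk hYmeas) hsmeas]
  rw [this]
  have hmapX : (PP n m D).map X = D := PP_map_eval D e0
  rw [hmapX]
  have : IsProbabilityMeasure ((PP n m D).map Y) :=
    Measure.isProbabilityMeasure_map hYmeas.aemeasurable
  rw [Measure.prod_apply_symm hsmeas]
  have hslice : ∀ y, D ((fun x => (x, y)) ⁻¹' s) = 0 := by
    intro y
    have : ((fun x : ℝ => (x, y)) ⁻¹' s) = {g y} := by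
      ext x; simp [hs]
    rw [this]; exact hatom (g y)
  simp only [hslice]
  simp

theorem measure_sum_eq (D : Measure ℝ) [IsProbabilityMeasure D]
    (hatom : ∀ x : ℝ, D {x} = 0) {E1 E2 : Finset (Fin n × Fin m)} (hne : E1 ≠ E2) :
    PP n m D {u : ESp n m | ∑ e ∈ E1, u e = ∑ e ∈ E2, u e} = 0 := by
  have hcase : (∃ e0, e0 ∈ E1 ∧ e0 ∉ E2) ∨ (∃ e0, e0 ∈ E2 ∧ e0 ∉ E1) := by
    by_contra hc
    push_neg at hc
    exact hne (Finset.Subset.antisymm (fun e he => hc.1 e he) (fun e he => hc.2 e he))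
  rcases hcase with ⟨e0, h1, h2⟩ | ⟨e0, h1, h2⟩
  · exact measure_sum_eq_aux D hatom h1 h2
  · have : {u : ESp n m | ∑ e ∈ E1, u e = ∑ e ∈ E2, u e}
        = {u : ESp n m | ∑ e ∈ E2, u e = ∑ e ∈ E1, u e} := by
      ext u; simp [eq_comm]
    rw [this]
    exact measure_sum_eq_aux D hatom h1 h2

theorem indep_of_local (D : Measure ℝ) [IsProbabilityMeasure D]
    (J₁ J₂ : Finset (Fin n × Fin m)) (hd : Disjoint J₁ J₂)
    {E₁ E₂ : Set (ESp n m)} (h₁ : MeasurableSet E₁) (h₂ : MeasurableSet E₂)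
    (l₁ : ∀ u u' : ESp n m, (∀ e ∈ J₁, u e = u' e) → (u ∈ E₁ ↔ u' ∈ E₁))
    (l₂ : ∀ u u' : ESp n m, (∀ e ∈ J₂, u e = u' e) → (u ∈ E₂ ↔ u' ∈ E₂)) :
    PP n m D (E₁ ∩ E₂) = PP n m D E₁ * PP n m D E₂ := by
  classical
  have hIndep := (iIndepFun_coords D).indepFun_finset J₁ J₂ hd (fun e => measurable_pi_apply e)
  set R₁ : ESp n m → ({x // x ∈ J₁} → ℝ) := fun u (i : {x // x ∈ J₁}) => u i with hR₁
  set R₂ : ESp n m → ({x // x ∈ J₂} → ℝ) := fun u (i : {x // x ∈ J₂}) => u i with hR₂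
  set ext₁ : ({x // x ∈ J₁} → ℝ) → ESp n m :=
    fun v e => if h : e ∈ J₁ then v ⟨e, h⟩ else 0 with hext₁
  set ext₂ : ({x // x ∈ J₂} → ℝ) → ESp n m :=
    fun v e => if h : e ∈ J₂ then v ⟨e, h⟩ else 0 with hext₂
  have hextmeas₁ : Measurable ext₁ := by
    apply measurable_pi_lambda
    intro e
    by_cases h : e ∈ J₁
    · simpa [ext₁, h] using measurable_pi_apply (⟨e, h⟩ : {x // x ∈ J₁})
    · simpa [ext₁, h] using measurable_const
  have hextmeas₂ : Measurable ext₂ := by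
    apply measurable_pi_lambda
    intro e
    by_cases h : e ∈ J₂
    · simpa [ext₂, h] using measurable_pi_apply (⟨e, h⟩ : {x // x ∈ J₂})
    · simpa [ext₂, h] using measurable_const
  have hE₁ : E₁ = R₁ ⁻¹' (ext₁ ⁻¹' E₁) := by
    ext u
    simp only [Set.mem_preimage]
    exact l₁ u (ext₁ (R₁ u)) (fun e he => by simp [ext₁, R₁, he])
  have hE₂ : E₂ = R₂ ⁻¹' (ext₂ ⁻¹' E₂) := by
    ext u
    simp only [Set.mem_preimage]
    exact l₂ u (ext₂ (R₂ u)) (fun e he => by simp [ext₂, R₂, he])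
  rw [hE₁, hE₂]
  exact hIndep.measure_inter_preimage_eq_mul _ _ (hextmeas₁ h₁) (hextmeas₂ h₂)

end ClassEFAux


open Finset
namespace ClassEFAux

theorem choose_prod_formula (n : ℕ) : ∀ s m : ℕ, n + s ≤ m →
    (Nat.choose m n : ℝ) * ∏ j ∈ Finset.range s, ((m : ℝ) - n - j)
      = (Nat.choose (m - s) n : ℝ) * ∏ j ∈ Finset.range s, ((m : ℝ) - j) := by
  intro s
  induction s with
  | zero => intro m _; simp
  | succ s ih =>
    intro m h
    have h' : n + s ≤ m := by omega
    have hM : n + 1 ≤ m - s := by omega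
    rw [Finset.prod_range_succ, Finset.prod_range_succ, ← mul_assoc, ← mul_assoc, ih m h']
    have key : (Nat.choose (m - s) n : ℝ) * ((m : ℝ) - n - s)
        = (Nat.choose (m - (s+1)) n : ℝ) * ((m : ℝ) - s) := by
      have hnat : Nat.choose (m - s - 1) n * (m - s) = Nat.choose (m - s) n * (m - s - n) := by
        have := Nat.choose_mul_succ_eq (m - s - 1) n
        have h1 : m - s - 1 + 1 = m - s := by omega
        rw [h1] at this
        exact this
      have hms : m - (s + 1) = m - s - 1 := by omega
      rw [hms]
      have hc1 : ((m - s : ℕ) : ℝ) = (m : ℝ) - s := by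
        push_cast [Nat.cast_sub (by omega : s ≤ m)]; ring
      have hc2 : ((m - s - n : ℕ) : ℝ) = (m : ℝ) - n - s := by
        push_cast [Nat.cast_sub (by omega : n ≤ m - s), Nat.cast_sub (by omega : s ≤ m)]; ring
      have := congrArg (fun x : ℕ => (x : ℝ)) hnat
      push_cast at this
      rw [hc1, hc2] at this
      linarith [this]
    calc (Nat.choose (m-s) n : ℝ) * (∏ j ∈ Finset.range s, ((m:ℝ) - j)) * ((m:ℝ) - n - s)
        = ((Nat.choose (m-s) n : ℝ) * ((m:ℝ) - n - s)) * ∏ j ∈ Finset.range s, ((m:ℝ) - j) := by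
          ring
      _ = ((Nat.choose (m-(s+1)) n : ℝ) * ((m:ℝ) - s)) * ∏ j ∈ Finset.range s, ((m:ℝ) - j) := by
          rw [key]
      _ = (Nat.choose (m-(s+1)) n : ℝ) * (∏ j ∈ Finset.range s, ((m:ℝ) - j)) * ((m:ℝ) - s) := by
          ring

theorem choose_le_choose_mul (n s : ℕ) : ∀ t : ℕ,
    Nat.choose (n + s + t) n ≤ Nat.choose (n + t) n * Nat.choose (n + s) n := by
  intro t
  induction t with
  | zero => simp [Nat.choose_self]
  | succ t ih =>
    have key1 : Nat.choose (n+s+t) n * (n+s+t+1) = Nat.choose (n+s+t+1) n * (s+t+1) := by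
      have := Nat.choose_mul_succ_eq (n+s+t) n
      have h1 : n + s + t + 1 - n = s + t + 1 := by omega
      rw [h1] at this
      convert this using 2 <;> omega
    have key2 : Nat.choose (n+t) n * (n+t+1) = Nat.choose (n+t+1) n * (t+1) := by
      have := Nat.choose_mul_succ_eq (n+t) n
      have h1 : n + t + 1 - n = t + 1 := by omega
      rw [h1] at this
      convert this using 2 <;> omega
    have key3 : Nat.choose (n+t) n * (n+s+t+1) ≤ Nat.choose (n+t+1) n * (s+t+1) := by
      apply Nat.le_of_mul_le_mul_right _ (Nat.succ_pos t)
      calc Nat.choose (n+t) n * (n+s+t+1) * (t+1)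
          ≤ Nat.choose (n+t) n * ((n+t+1) * (s+t+1)) := by
            rw [mul_assoc]
            apply Nat.mul_le_mul_left
            nlinarith
        _ = Nat.choose (n+t+1) n * (t+1) * (s+t+1) := by rw [← mul_assoc, key2]
        _ = Nat.choose (n+t+1) n * (s+t+1) * (t+1) := by ring
    apply Nat.le_of_mul_le_mul_right _ (show 0 < s + t + 1 by omega)
    calc Nat.choose (n+s+t+1) n * (s+t+1) = Nat.choose (n+s+t) n * (n+s+t+1) := key1.symm
      _ ≤ Nat.choose (n+t) n * Nat.choose (n+s) n * (n+s+t+1) :=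
          Nat.mul_le_mul_right _ ih
      _ = (Nat.choose (n+t) n * (n+s+t+1)) * Nat.choose (n+s) n := by ring
      _ ≤ (Nat.choose (n+t+1) n * (s+t+1)) * Nat.choose (n+s) n :=
          Nat.mul_le_mul_right _ key3
      _ = Nat.choose (n+t+1) n * Nat.choose (n+s) n * (s+t+1) := by ring

theorem choose_le_two_pow' (a b : ℕ) : Nat.choose a b ≤ 2 ^ a := by
  rcases le_or_gt b a with h | h
  · calc Nat.choose a b ≤ ∑ i ∈ Finset.range (a+1), Nat.choose a i :=
        Finset.single_le_sum (fun i _ => Nat.zero_le _) (Finset.mem_range.2 (by omega))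
      _ = 2 ^ a := Nat.sum_range_choose a
  · rw [Nat.choose_eq_zero_of_lt h]; exact Nat.zero_le _

set_option maxHeartbeats 2000000 in
theorem coreAnalytic (m n s : ℕ) (h : n + s ≤ m) :
    (Nat.choose m n : ℝ) ≤ (Nat.choose (m - s) n : ℝ) *
      Real.exp ((n : ℝ) * (2 * s + n) / ((m : ℝ) - s + 1)) := by
  obtain ⟨a, hadef⟩ : ∃ a : ℕ, a = m - n - s + 1 := ⟨_, rfl⟩
  have ha1 : 1 ≤ a := by omega
  have hcasta : (a : ℝ) = (m : ℝ) - n - s + 1 := by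
    rw [hadef]; push_cast [Nat.cast_sub (by omega : s ≤ m - n), Nat.cast_sub (by omega : n ≤ m)]
    ring
  have hapos : (0 : ℝ) < a := by positivity
  have hd : (m : ℝ) - s + 1 = (a : ℝ) + n := by rw [hcasta]; ring
  have hdpos : (0 : ℝ) < (m : ℝ) - s + 1 := by rw [hd]; positivity
  have hchoosepos : (0 : ℝ) < (Nat.choose (m - s) n : ℝ) := by
    exact_mod_cast Nat.choose_pos (by omega : n ≤ m - s)
  by_cases hcase : n ≤ a ∨ s ≤ a
  · -- product-formula case
    have hprod := choose_prod_formula n s m h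
    have hApos : (0 : ℝ) < ∏ j ∈ Finset.range s, ((m : ℝ) - n - j) := by
      apply Finset.prod_pos
      intro j hj
      rw [Finset.mem_range] at hj
      have : (j : ℝ) ≤ (s : ℝ) - 1 := by
        have : (j : ℝ) + 1 ≤ s := by exact_mod_cast hj
        linarith
      have hmr : (n : ℝ) + s ≤ m := by exact_mod_cast h
      linarith
    have hB_le : (∏ j ∈ Finset.range s, ((m : ℝ) - j))
        ≤ (∏ j ∈ Finset.range s, ((m : ℝ) - n - j)) * Real.exp ((s : ℝ) * n / a) := by
      have hfac : ∀ j ∈ Finset.range s,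
          ((m : ℝ) - j) ≤ ((m : ℝ) - n - j) * Real.exp ((n : ℝ) / a) := by
        intro j hj
        rw [Finset.mem_range] at hj
        have hj' : (j : ℝ) + 1 ≤ s := by exact_mod_cast hj
        have hmr : (n : ℝ) + s ≤ m := by exact_mod_cast h
        have haj : (a : ℝ) ≤ (m : ℝ) - n - j := by rw [hcasta]; linarith
        have hpos' : (0 : ℝ) < (m : ℝ) - n - j := lt_of_lt_of_le hapos haj
        have h1 : (n : ℝ) ≤ ((m : ℝ) - n - j) * ((n : ℝ) / a) := by
          rw [mul_div_assoc']
          rw [le_div_iff₀ hapos]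
          have : (a : ℝ) * n ≤ ((m : ℝ) - n - j) * n := by
            apply mul_le_mul_of_nonneg_right haj (by positivity)
          linarith
        have h2 : (1 : ℝ) + (n : ℝ) / a ≤ Real.exp ((n : ℝ) / a) := by
          have := Real.add_one_le_exp ((n : ℝ) / a)
          linarith
        calc (m : ℝ) - j = ((m : ℝ) - n - j) + n := by ring
          _ ≤ ((m : ℝ) - n - j) + ((m : ℝ) - n - j) * ((n : ℝ) / a) := by linarith
          _ = ((m : ℝ) - n - j) * (1 + (n : ℝ) / a) := by ring
          _ ≤ ((m : ℝ) - n - j) * Real.exp ((n : ℝ) / a) := by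
              apply mul_le_mul_of_nonneg_left h2 (le_of_lt hpos')
      calc (∏ j ∈ Finset.range s, ((m : ℝ) - j))
          ≤ ∏ j ∈ Finset.range s, (((m : ℝ) - n - j) * Real.exp ((n : ℝ) / a)) := by
            apply Finset.prod_le_prod
            · intro j hj
              rw [Finset.mem_range] at hj
              have hj' : (j : ℝ) + 1 ≤ s := by exact_mod_cast hj
              have hmr : (n : ℝ) + s ≤ m := by exact_mod_cast h
              have hn0 : (0:ℝ) ≤ n := Nat.cast_nonneg n
              linarith
            · exact hfac
        _ = (∏ j ∈ Finset.range s, ((m : ℝ) - n - j)) * (Real.exp ((n : ℝ) / a)) ^ s := by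
            rw [Finset.prod_mul_distrib, Finset.prod_const, Finset.card_range]
        _ = (∏ j ∈ Finset.range s, ((m : ℝ) - n - j)) * Real.exp ((s : ℝ) * n / a) := by
            rw [← Real.exp_nat_mul]
            congr 1
            ring
    -- combine
    have hmain : (Nat.choose m n : ℝ) * (∏ j ∈ Finset.range s, ((m : ℝ) - n - j))
        ≤ (Nat.choose (m - s) n : ℝ) * Real.exp ((s : ℝ) * n / a) *
          (∏ j ∈ Finset.range s, ((m : ℝ) - n - j)) := by
      rw [hprod]
      calc (Nat.choose (m-s) n : ℝ) * ∏ j ∈ Finset.range s, ((m:ℝ) - j)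
          ≤ (Nat.choose (m-s) n : ℝ) *
            ((∏ j ∈ Finset.range s, ((m : ℝ) - n - j)) * Real.exp ((s : ℝ) * n / a)) :=
            mul_le_mul_of_nonneg_left hB_le (le_of_lt hchoosepos)
        _ = (Nat.choose (m-s) n : ℝ) * Real.exp ((s : ℝ) * n / a) *
            (∏ j ∈ Finset.range s, ((m : ℝ) - n - j)) := by ring
    have step1 : (Nat.choose m n : ℝ) ≤ (Nat.choose (m-s) n : ℝ) * Real.exp ((s : ℝ) * n / a) :=
      le_of_mul_le_mul_right (by linarith [hmain]) hApos
    have step2 : Real.exp ((s : ℝ) * n / a) ≤ Real.exp ((n : ℝ) * (2*s+n) / ((m:ℝ) - s + 1)) := by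
      rw [Real.exp_le_exp, hd]
      rw [div_le_div_iff₀ hapos (by positivity)]
      have hsn : (s:ℝ) * n * ((a:ℝ) + n) ≤ (n:ℝ) * (2*s+n) * a := by
        rcases hcase with hna | hsa
        · have hna' : (n:ℝ) ≤ a := by exact_mod_cast hna
          have hint : ((s:ℝ) * n) * n ≤ ((s:ℝ) * n) * a :=
            mul_le_mul_of_nonneg_left hna'
              (mul_nonneg (Nat.cast_nonneg s) (Nat.cast_nonneg n))
          nlinarith [mul_nonneg (mul_nonneg (Nat.cast_nonneg (α := ℝ) n)
            (Nat.cast_nonneg (α := ℝ) n)) (Nat.cast_nonneg (α := ℝ) a)]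
        · have hsa' : (s:ℝ) ≤ a := by exact_mod_cast hsa
          have hint : ((n:ℝ) * n) * s ≤ ((n:ℝ) * n) * a :=
            mul_le_mul_of_nonneg_left hsa'
              (mul_nonneg (Nat.cast_nonneg n) (Nat.cast_nonneg n))
          nlinarith [mul_nonneg (mul_nonneg (Nat.cast_nonneg (α := ℝ) s)
            (Nat.cast_nonneg (α := ℝ) n)) (Nat.cast_nonneg (α := ℝ) a)]
      linarith
    calc (Nat.choose m n : ℝ) ≤ (Nat.choose (m-s) n : ℝ) * Real.exp ((s : ℝ) * n / a) := step1
      _ ≤ (Nat.choose (m-s) n : ℝ) * Real.exp ((n : ℝ) * (2*s+n) / ((m:ℝ) - s + 1)) :=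
          mul_le_mul_of_nonneg_left step2 (le_of_lt hchoosepos)
  · -- small a case
    push_neg at hcase
    obtain ⟨han, has⟩ := hcase
    have hn1 : 1 ≤ n := by omega
    have hs1 : 1 ≤ s := by omega
    -- C(m,n) ≤ C(m-s,n) * C(n+s,n)
    have hnat : Nat.choose m n ≤ Nat.choose (m - s) n * Nat.choose (n + s) n := by
      have := choose_le_choose_mul n s (m - n - s)
      have e1 : n + s + (m - n - s) = m := by omega
      have e2 : n + (m - n - s) = m - s := by omega
      rwa [e1, e2] at this
    have hpow : Nat.choose (n + s) n ≤ 2 ^ (n + s) := choose_le_two_pow' (n+s) n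
    have hreal1 : (Nat.choose m n : ℝ) ≤ (Nat.choose (m-s) n : ℝ) * (2:ℝ) ^ (n+s) := by
      calc (Nat.choose m n : ℝ) ≤ (Nat.choose (m-s) n : ℝ) * (Nat.choose (n+s) n : ℝ) := by
            exact_mod_cast hnat
        _ ≤ (Nat.choose (m-s) n : ℝ) * (2:ℝ) ^ (n+s) := by
            apply mul_le_mul_of_nonneg_left _ (le_of_lt hchoosepos)
            exact_mod_cast hpow
    have hexp : (2:ℝ) ^ (n+s) ≤ Real.exp ((n : ℝ) * (2*s+n) / ((m:ℝ) - s + 1)) := by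
      have h2pos : (0:ℝ) < (2:ℝ) ^ (n+s) := by positivity
      rw [← Real.exp_log h2pos, Real.exp_le_exp, Real.log_pow]
      have hlog2 : Real.log 2 ≤ (7/10 : ℝ) := by
        have := Real.log_two_lt_d9
        linarith
      rw [hd, le_div_iff₀ (by positivity : (0:ℝ) < (a:ℝ) + n)]
      have hcast : ((n + s : ℕ) : ℝ) = (n : ℝ) + s := by push_cast; ring
      rw [hcast]
      have han' : (a:ℝ) + 1 ≤ n := by exact_mod_cast han
      have has' : (a:ℝ) + 1 ≤ s := by exact_mod_cast has
      have hlog0 : 0 ≤ Real.log 2 := Real.log_nonneg (by norm_num)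
      have hn' : (1:ℝ) ≤ n := by exact_mod_cast hn1
      have hs' : (1:ℝ) ≤ s := by exact_mod_cast hs1
      have e2' : ((n:ℝ)+s) * Real.log 2 ≤ ((n:ℝ)+s) * (7/10 : ℝ) :=
        mul_le_mul_of_nonneg_left hlog2 (by linarith)
      rcases le_or_gt (n:ℝ) (s:ℝ) with hns | hns
      · have e1 : (a:ℝ) + n ≤ 2*n - 1 := by linarith
        have e3 : ((n:ℝ)+s) * Real.log 2 * ((a:ℝ)+n) ≤ ((n:ℝ)+s) * (7/10 : ℝ) * (2*n-1) := by
          apply mul_le_mul e2' e1 (by positivity) (by positivity)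
        have e4 : ((n:ℝ)+s) * (7/10 : ℝ) * (2*n-1) ≤ (n:ℝ) * (2*s+n) := by
          nlinarith [mul_le_mul_of_nonneg_left hns (Nat.cast_nonneg (α := ℝ) n)]
        linarith
      · have e1 : (a:ℝ) + n ≤ (n:ℝ) + s - 1 := by linarith
        have e3 : ((n:ℝ)+s) * Real.log 2 * ((a:ℝ)+n) ≤ ((n:ℝ)+s) * (7/10 : ℝ) * ((n:ℝ)+s) := by
          apply mul_le_mul e2' (by linarith) (by positivity) (by positivity)
        have e4 : ((n:ℝ)+s) * (7/10 : ℝ) * ((n:ℝ)+s) ≤ (n:ℝ) * (2*s+n) := by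
          nlinarith [mul_le_mul_of_nonneg_left hns.le (Nat.cast_nonneg (α := ℝ) s),
            mul_le_mul_of_nonneg_right hns.le (Nat.cast_nonneg (α := ℝ) n)]
        linarith
    calc (Nat.choose m n : ℝ) ≤ (Nat.choose (m-s) n : ℝ) * (2:ℝ) ^ (n+s) := hreal1
      _ ≤ (Nat.choose (m-s) n : ℝ) * Real.exp ((n : ℝ) * (2*s+n) / ((m:ℝ) - s + 1)) :=
          mul_le_mul_of_nonneg_left hexp (le_of_lt hchoosepos)

end ClassEFAux


open MeasureTheory ProbabilityTheory Filter Finset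
open scoped ENNReal

section part4
open ClassEF ClassEFAux

namespace ClassEFAux

variable {n m : ℕ}

def wOf (u : ESp n m) : Fin n → Fin m → ℝ := fun i j => u (i, j)

noncomputable def valE (Np : Finset (Fin n)) (T : Finset (Fin m)) (u : ESp n m) : ℝ :=
  ClassEF.vval (wOf u) Np T

def Cand (m np : ℕ) : Finset (Finset (Fin m)) := Finset.powersetCard np Finset.univ

def Aev (Np : Finset (Fin n)) (T : Finset (Fin m)) : Set (ESp n m) :=
  {u | ∀ T' ∈ Cand m Np.card, T' ≠ T → valE Np T' u < valE Np T u}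

theorem mem_Cand {np : ℕ} {T : Finset (Fin m)} : T ∈ Cand m np ↔ T.card = np := by
  simp [Cand, Finset.mem_powersetCard_univ]

theorem measurable_valE (Np : Finset (Fin n)) (T : Finset (Fin m)) :
    Measurable (valE Np T) := by
  classical
  unfold valE ClassEF.vval
  apply measurable_sup''
  intro M
  unfold ClassEF.weightSum
  apply Finset.measurable_sum
  intro e _
  exact measurable_pi_apply (e.1, e.2)

theorem measurableSet_Aev (Np : Finset (Fin n)) (T : Finset (Fin m)) :
    MeasurableSet (Aev Np T) := by
  have h1 : Aev Np T = ⋂ (T' : Finset (Fin m)), ⋂ (_ : T' ∈ Cand m Np.card ∧ T' ≠ T),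
      {u : ESp n m | valE Np T' u < valE Np T u} := by
    ext u
    simp only [Aev, Set.mem_setOf_eq, Set.mem_iInter]
    constructor
    · intro h T' h2; exact h T' h2.1 h2.2
    · intro h T' h1 h2; exact h T' ⟨h1, h2⟩
  rw [h1]
  exact MeasurableSet.iInter fun T' => MeasurableSet.iInter fun _ =>
    measurableSet_lt (measurable_valE Np T') (measurable_valE Np T)

theorem Aev_disj (Np : Finset (Fin n)) {T T' : Finset (Fin m)}
    (hT : T ∈ Cand m Np.card) (hT' : T' ∈ Cand m Np.card) (hne : T ≠ T') :
    Disjoint (Aev Np T) (Aev Np T') := by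
  rw [Set.disjoint_left]
  intro u h1 h2
  have hlt1 := h2 T hT hne
  have hlt2 := h1 T' hT' (Ne.symm hne)
  linarith

theorem local_valE (Np : Finset (Fin n)) (T : Finset (Fin m)) (u u' : ESp n m)
    (h : ∀ e ∈ Np ×ˢ (Finset.univ : Finset (Fin m)), u e = u' e) :
    valE Np T u = valE Np T u' := by
  apply ClassEFAux.vval_congr
  intro i hi j _
  exact h (i, j) (Finset.mem_product.2 ⟨hi, Finset.mem_univ j⟩)

theorem local_Aev (Np : Finset (Fin n)) (T : Finset (Fin m)) (u u' : ESp n m)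
    (h : ∀ e ∈ Np ×ˢ (Finset.univ : Finset (Fin m)), u e = u' e) :
    u ∈ Aev Np T ↔ u' ∈ Aev Np T := by
  unfold Aev
  simp only [Set.mem_setOf_eq]
  constructor
  · intro hh T' h1 h2
    rw [← local_valE Np T' u u' h, ← local_valE Np T u u' h]
    exact hh T' h1 h2
  · intro hh T' h1 h2
    rw [local_valE Np T' u u' h, local_valE Np T u u' h]
    exact hh T' h1 h2

theorem valE_perm (Np : Finset (Fin n)) (S : Finset (Fin m)) (σ : Equiv.Perm (Fin m))
    (u : ESp n m) : valE Np S (permMap n m σ u) = valE Np (S.image σ) u := by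
  unfold valE
  have : wOf (permMap n m σ u) = fun i j => (wOf u) i (σ j) := rfl
  rw [this]
  exact vval_perm (wOf u) σ S

theorem permMap_preimage_Aev (Np : Finset (Fin n)) (T : Finset (Fin m))
    (σ : Equiv.Perm (Fin m)) :
    (permMap n m σ) ⁻¹' (Aev Np T) = Aev Np (T.image σ) := by
  ext u
  simp only [Set.mem_preimage, Aev, Set.mem_setOf_eq]
  constructor
  · intro h R hR hRne
    have hR' : R.image σ.symm ∈ Cand m Np.card := by
      rw [mem_Cand] at hR ⊢
      rw [Finset.card_image_of_injective _ σ.symm.injective, hR]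
    have him : (R.image σ.symm).image σ = R := by
      rw [Finset.image_image]
      simp
    have hne2 : R.image σ.symm ≠ T := by
      intro he
      apply hRne
      rw [← he, him]
    have := h (R.image σ.symm) hR' hne2
    rw [valE_perm, valE_perm, him] at this
    exact this
  · intro h T'' hT'' hne
    rw [valE_perm, valE_perm]
    apply h
    · rw [mem_Cand] at hT'' ⊢
      rw [Finset.card_image_of_injective _ σ.injective, hT'']
    · intro he
      exact hne (Finset.image_injective σ.injective he)

theorem Aev_uniform (D : Measure ℝ) [IsProbabilityMeasure D]
    (Np : Finset (Fin n)) {T T' : Finset (Fin m)}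
    (hT : T ∈ Cand m Np.card) (hT' : T' ∈ Cand m Np.card) :
    PP n m D (Aev Np T) = PP n m D (Aev Np T') := by
  rw [mem_Cand] at hT hT'
  obtain ⟨σ, hσ⟩ := exists_perm_image (T := T) (T' := T') (by rw [hT, hT'])
  have h1 := (permMap_measurePreserving D σ).measure_preimage
    (measurableSet_Aev Np T).nullMeasurableSet
  rw [permMap_preimage_Aev, hσ] at h1
  exact h1.symm

def Gpos (n m : ℕ) : Set (ESp n m) := {u | ∀ e, 0 < u e}

def Gdist (n m : ℕ) : Set (ESp n m) :=
  {u | ∀ E1 E2 : Finset (Fin n × Fin m), E1 ≠ E2 → ∑ e ∈ E1, u e ≠ ∑ e ∈ E2, u e}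

theorem Gpos_compl_null (D : Measure ℝ) [IsProbabilityMeasure D]
    (hsupp : D ((Set.Icc (0 : ℝ) 1)ᶜ) = 0) (hatom : ∀ x : ℝ, D {x} = 0) :
    PP n m D (Gpos n m)ᶜ = 0 := by
  have h1 : (Gpos n m)ᶜ ⊆ ⋃ e, (fun u : ESp n m => u e) ⁻¹' (Set.Iic 0) := by
    intro u hu
    simp only [Gpos, Set.mem_compl_iff, Set.mem_setOf_eq, not_forall, not_lt] at hu
    obtain ⟨e, he⟩ := hu
    exact Set.mem_iUnion.2 ⟨e, he⟩
  refine measure_mono_null h1 (measure_iUnion_null fun e => ?_)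
  rw [PP_eval D e measurableSet_Iic]
  have h2 : Set.Iic (0:ℝ) ⊆ (Set.Icc (0:ℝ) 1)ᶜ ∪ {0} := by
    intro x hx
    rcases eq_or_lt_of_le (Set.mem_Iic.1 hx) with h | h
    · exact Or.inr (by simp [h])
    · exact Or.inl (by simp [Set.mem_Icc]; intro h'; linarith)
  exact measure_mono_null h2 (measure_union_null hsupp (hatom 0))

theorem Gdist_compl_null (D : Measure ℝ) [IsProbabilityMeasure D]
    (hatom : ∀ x : ℝ, D {x} = 0) :
    PP n m D (Gdist n m)ᶜ = 0 := by
  have h1 : (Gdist n m)ᶜ ⊆ ⋃ (E1 : Finset (Fin n × Fin m)) (E2 : Finset (Fin n × Fin m))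
      (_ : E1 ≠ E2), {u : ESp n m | ∑ e ∈ E1, u e = ∑ e ∈ E2, u e} := by
    intro u hu
    simp only [Gdist, Set.mem_compl_iff, Set.mem_setOf_eq, not_forall, not_ne_iff] at hu
    obtain ⟨E1, E2, hne, heq⟩ := hu
    exact Set.mem_iUnion.2 ⟨E1, Set.mem_iUnion.2 ⟨E2, Set.mem_iUnion.2 ⟨hne, heq⟩⟩⟩
  refine measure_mono_null h1 ?_
  refine measure_iUnion_null fun E1 => measure_iUnion_null fun E2 => measure_iUnion_null fun hne =>
    measure_sum_eq D hatom hne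

theorem good_subset (Np : Finset (Fin n)) (hnp : Np.card ≤ m) :
    Gpos n m ∩ Gdist n m ⊆ ⋃ T ∈ Cand m Np.card, Aev Np T := by
  rintro u ⟨hpos, hdist⟩
  have hdist' : ∀ M M' : Finset ((Fin n) × (Fin m)), M ≠ M' →
      ClassEF.weightSum (wOf u) M ≠ ClassEF.weightSum (wOf u) M' := by
    intro M M' hne
    have h1 : ∀ M0 : Finset ((Fin n) × (Fin m)),
        ClassEF.weightSum (wOf u) M0 = ∑ e ∈ M0, u e := by
      intro M0
      refine Finset.sum_congr rfl fun e _ => ?_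
      simp [wOf]
    rw [h1, h1]
    exact hdist M M' hne
  obtain ⟨T, hT, hstrict⟩ := exists_strict_max (w := wOf u) (Np := Np)
    (fun i j => hpos (i, j)) hdist' (by simpa using hnp)
  exact Set.mem_biUnion (by exact hT) (fun T' hT' hne => hstrict T' hT' hne)

theorem union_Aev_one (D : Measure ℝ) [IsProbabilityMeasure D]
    (hsupp : D ((Set.Icc (0 : ℝ) 1)ᶜ) = 0) (hatom : ∀ x : ℝ, D {x} = 0)
    (Np : Finset (Fin n)) (hnp : Np.card ≤ m) :
    PP n m D (⋃ T ∈ Cand m Np.card, Aev Np T) = 1 := by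
  have hmeas : MeasurableSet (⋃ T ∈ Cand m Np.card, Aev Np T) :=
    MeasurableSet.biUnion (Set.to_countable _) (fun T _ => measurableSet_Aev Np T)
  rw [← prob_compl_eq_zero_iff hmeas]
  have hsub : (⋃ T ∈ Cand m Np.card, Aev Np T)ᶜ ⊆ (Gpos n m)ᶜ ∪ (Gdist n m)ᶜ := by
    rw [← Set.compl_inter]
    exact Set.compl_subset_compl.2 (good_subset Np hnp)
  exact measure_mono_null hsub
    (measure_union_null (Gpos_compl_null D hsupp hatom) (Gdist_compl_null D hatom))

theorem Aev_prob (D : Measure ℝ) [IsProbabilityMeasure D]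
    (hsupp : D ((Set.Icc (0 : ℝ) 1)ᶜ) = 0) (hatom : ∀ x : ℝ, D {x} = 0)
    (Np : Finset (Fin n)) (hnp : Np.card ≤ m) {T : Finset (Fin m)}
    (hT : T ∈ Cand m Np.card) :
    PP n m D (Aev Np T) = ((Nat.choose m Np.card : ℕ) : ℝ≥0∞)⁻¹ := by
  classical
  have hdisj : (↑(Cand m Np.card) : Set (Finset (Fin m))).PairwiseDisjoint (Aev Np) := by
    intro T1 h1 T2 h2 hne
    exact Aev_disj Np h1 h2 hne
  have hsum : PP n m D (⋃ T' ∈ Cand m Np.card, Aev Np T')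
      = ∑ T' ∈ Cand m Np.card, PP n m D (Aev Np T') :=
    measure_biUnion_finset hdisj (fun T' _ => measurableSet_Aev Np T')
  rw [union_Aev_one D hsupp hatom Np hnp] at hsum
  have huni : ∀ T' ∈ Cand m Np.card, PP n m D (Aev Np T') = PP n m D (Aev Np T) :=
    fun T' hT' => Aev_uniform D Np hT' hT
  rw [Finset.sum_congr rfl huni, Finset.sum_const] at hsum
  have hcard : (Cand m Np.card).card = Nat.choose m Np.card := by
    rw [Cand, Finset.card_powersetCard, Finset.card_univ, Fintype.card_fin]
  rw [hcard] at hsum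
  have hc0 : ((Nat.choose m Np.card : ℕ) : ℝ≥0∞) ≠ 0 := by
    simp only [ne_eq, Nat.cast_eq_zero]
    exact (Nat.choose_pos hnp).ne'
  have hctop : ((Nat.choose m Np.card : ℕ) : ℝ≥0∞) ≠ ⊤ := ENNReal.natCast_ne_top _
  have hs : ((Nat.choose m Np.card : ℕ) : ℝ≥0∞) * PP n m D (Aev Np T) = 1 := by
    rw [← nsmul_eq_mul]
    exact hsum.symm
  calc PP n m D (Aev Np T)
      = ((Nat.choose m Np.card : ℕ) : ℝ≥0∞)⁻¹ *
        (((Nat.choose m Np.card : ℕ) : ℝ≥0∞) * PP n m D (Aev Np T)) := by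
        rw [← mul_assoc, ENNReal.inv_mul_cancel hc0 hctop, one_mul]
    _ = ((Nat.choose m Np.card : ℕ) : ℝ≥0∞)⁻¹ := by rw [hs, mul_one]

end ClassEFAux
end part4


open MeasureTheory ProbabilityTheory Filter Finset
open scoped ENNReal

namespace ClassEFAux

variable {n m k : ℕ}

def AA (cls : Fin k → Finset (Fin n)) (r : ℕ) (T : Fin k → Finset (Fin m)) : Set (ESp n m) :=
  {u | ∀ p : Fin k, (p : ℕ) < r → u ∈ Aev (cls p) (T p)}

open Classical in
noncomputable def gtt (cls : Fin k → Finset (Fin n)) (r : ℕ) :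
    Finset (Fin k → Finset (Fin m)) :=
  Finset.univ.filter fun T =>
    (∀ p : Fin k, ((p : ℕ) < r → T p ∈ Cand m (cls p).card) ∧ (r ≤ (p : ℕ) → T p = ∅)) ∧
    (∀ p q : Fin k, (p : ℕ) < r → (q : ℕ) < r → p ≠ q → Disjoint (T p) (T q))

theorem mem_gtt {cls : Fin k → Finset (Fin n)} {r : ℕ} {T : Fin k → Finset (Fin m)} :
    T ∈ gtt cls r ↔
      (∀ p : Fin k, ((p : ℕ) < r → T p ∈ Cand m (cls p).card) ∧ (r ≤ (p : ℕ) → T p = ∅)) ∧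
      (∀ p q : Fin k, (p : ℕ) < r → (q : ℕ) < r → p ≠ q → Disjoint (T p) (T q)) := by
  classical
  simp [gtt]

theorem measurableSet_AA (cls : Fin k → Finset (Fin n)) (r : ℕ) (T : Fin k → Finset (Fin m)) :
    MeasurableSet (AA cls r T) := by
  have h1 : AA cls r T = ⋂ (p : Fin k), ⋂ (_ : (p : ℕ) < r), Aev (cls p) (T p) := by
    ext u; simp [AA]
  rw [h1]
  exact MeasurableSet.iInter fun p => MeasurableSet.iInter fun _ =>
    measurableSet_Aev (cls p) (T p)

def Jlow (cls : Fin k → Finset (Fin n)) (r : ℕ) : Finset (Fin n × Fin m) :=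
  (Finset.univ.filter fun i : Fin n => ∃ p : Fin k, (p : ℕ) < r ∧ i ∈ cls p) ×ˢ Finset.univ

theorem local_AA (cls : Fin k → Finset (Fin n)) (r : ℕ) (T : Fin k → Finset (Fin m))
    (u u' : ESp n m) (h : ∀ e ∈ Jlow cls r, u e = u' e) :
    u ∈ AA cls r T ↔ u' ∈ AA cls r T := by
  unfold AA
  simp only [Set.mem_setOf_eq]
  have key : ∀ p : Fin k, (p : ℕ) < r →
      (u ∈ Aev (cls p) (T p) ↔ u' ∈ Aev (cls p) (T p)) := by
    intro p hp
    apply local_Aev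
    intro e he
    apply h
    rw [Finset.mem_product] at he
    exact Finset.mem_product.2 ⟨Finset.mem_filter.2 ⟨Finset.mem_univ _, ⟨p, hp, he.1⟩⟩,
      Finset.mem_univ _⟩
  constructor
  · intro hh p hp; exact (key p hp).1 (hh p hp)
  · intro hh p hp; exact (key p hp).2 (hh p hp)

theorem AA_congr (cls : Fin k → Finset (Fin n)) (r : ℕ) {T T' : Fin k → Finset (Fin m)}
    (h : ∀ p : Fin k, (p : ℕ) < r → T p = T' p) : AA cls r T = AA cls r T' := by
  ext u
  unfold AA
  simp only [Set.mem_setOf_eq]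
  constructor
  · intro hh p hp; rw [← h p hp]; exact hh p hp
  · intro hh p hp; rw [h p hp]; exact hh p hp

theorem AA_succ (cls : Fin k → Finset (Fin n)) {r : ℕ} (hr : r < k)
    (T : Fin k → Finset (Fin m)) :
    AA cls (r+1) T = AA cls r T ∩ Aev (cls ⟨r, hr⟩) (T ⟨r, hr⟩) := by
  ext u
  unfold AA
  simp only [Set.mem_setOf_eq, Set.mem_inter_iff]
  constructor
  · intro h
    refine ⟨fun p hp => h p (by omega), h ⟨r, hr⟩ (by simp)⟩
  · rintro ⟨h1, h2⟩ p hp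
    rcases Nat.lt_or_ge (p : ℕ) r with h | h
    · exact h1 p h
    · have : p = ⟨r, hr⟩ := by
        apply Fin.ext
        simp only []
        omega
      rw [this]
      exact h2

theorem AA_zero (cls : Fin k → Finset (Fin n)) (T : Fin k → Finset (Fin m)) :
    AA cls 0 T = Set.univ := by
  ext u; simp [AA]

theorem gtt_zero (cls : Fin k → Finset (Fin n)) :
    gtt (m := m) cls 0 = {fun _ => ∅} := by
  ext T
  rw [mem_gtt, Finset.mem_singleton]
  constructor
  · intro h
    funext p
    exact (h.1 p).2 (Nat.zero_le _)
  · rintro rfl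
    exact ⟨fun p => ⟨fun h => absurd h (Nat.not_lt_zero _), fun _ => rfl⟩,
      fun p q hp => absurd hp (Nat.not_lt_zero _)⟩

theorem AA_disj (cls : Fin k → Finset (Fin n)) (r : ℕ) {T T' : Fin k → Finset (Fin m)}
    (hT : T ∈ gtt cls r) (hT' : T' ∈ gtt cls r) (hne : T ≠ T') :
    Disjoint (AA cls r T) (AA cls r T') := by
  rw [mem_gtt] at hT hT'
  obtain ⟨p, hp⟩ : ∃ p, T p ≠ T' p := by
    by_contra h
    push_neg at h
    exact hne (funext h)
  have hpr : (p : ℕ) < r := by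
    by_contra h
    push_neg at h
    rw [(hT.1 p).2 h, (hT'.1 p).2 h] at hp
    exact hp rfl
  have hdisj := Aev_disj (cls p) ((hT.1 p).1 hpr) ((hT'.1 p).1 hpr) hp
  apply Disjoint.mono _ _ hdisj
  · intro u hu; exact hu p hpr
  · intro u hu; exact hu p hpr

def srr (cls : Fin k → Finset (Fin n)) (r : ℕ) : ℕ :=
  ∑ p ∈ Finset.univ.filter (fun p : Fin k => (p : ℕ) < r), (cls p).card

def Wof (r : ℕ) (T : Fin k → Finset (Fin m)) : Finset (Fin m) :=
  (Finset.univ.filter (fun p : Fin k => (p : ℕ) < r)).biUnion T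

theorem Wof_card (cls : Fin k → Finset (Fin n)) (r : ℕ) {T : Fin k → Finset (Fin m)}
    (hT : T ∈ gtt cls r) : (Wof r T).card = srr cls r := by
  rw [mem_gtt] at hT
  rw [Wof, Finset.card_biUnion]
  · refine Finset.sum_congr rfl fun p hp => ?_
    rw [Finset.mem_filter] at hp
    exact mem_Cand.1 ((hT.1 p).1 hp.2)
  · intro p hp q hq hpq
    rw [Finset.mem_coe, Finset.mem_filter] at hp hq
    exact hT.2 p q hp.2 hq.2 hpq

open Classical in
noncomputable def allowed (cls : Fin k → Finset (Fin n)) (r : ℕ) (hr : r < k)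
    (T : Fin k → Finset (Fin m)) : Finset (Finset (Fin m)) :=
  (Cand m (cls ⟨r, hr⟩).card).filter fun S => Disjoint S (Wof r T)

theorem allowed_card (cls : Fin k → Finset (Fin n)) (r : ℕ) (hr : r < k)
    {T : Fin k → Finset (Fin m)} (hT : T ∈ gtt cls r) :
    (allowed cls r hr T).card = Nat.choose (m - srr cls r) (cls ⟨r, hr⟩).card := by
  classical
  have h1 : allowed cls r hr T
      = Finset.powersetCard (cls ⟨r, hr⟩).card (Finset.univ \ Wof r T) := by
    ext S
    rw [allowed, Finset.mem_filter, mem_Cand, Finset.mem_powersetCard]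
    constructor
    · rintro ⟨hcard, hdisj⟩
      exact ⟨Finset.subset_sdiff.2 ⟨Finset.subset_univ _, hdisj⟩, hcard⟩
    · rintro ⟨hsub, hcard⟩
      exact ⟨hcard, (Finset.subset_sdiff.1 hsub).2⟩
  rw [h1, Finset.card_powersetCard, Finset.card_sdiff_of_subset (Finset.subset_univ _),
    Finset.card_univ, Fintype.card_fin, Wof_card cls r hT]

theorem gtt_succ (cls : Fin k → Finset (Fin n)) (r : ℕ) (hr : r < k) :
    gtt (m := m) cls (r+1) = (gtt cls r).biUnion
      (fun T => (allowed cls r hr T).image fun S => Function.update T ⟨r, hr⟩ S) := by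
  classical
  ext T'
  rw [Finset.mem_biUnion]
  constructor
  · intro hT'
    rw [mem_gtt] at hT'
    set rr : Fin k := ⟨r, hr⟩ with hrr
    have hval : (rr : ℕ) = r := by rw [hrr]
    refine ⟨Function.update T' rr ∅, ?_, ?_⟩
    · rw [mem_gtt]
      constructor
      · intro p
        constructor
        · intro hp
          have hpne : p ≠ rr := by
            intro he; rw [he, hval] at hp; omega
          rw [Function.update_of_ne hpne]
          exact (hT'.1 p).1 (by omega)
        · intro hp
          by_cases hpe : p = rr
          · rw [hpe, Function.update_self]
          · rw [Function.update_of_ne hpe]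
            apply (hT'.1 p).2
            have : (p : ℕ) ≠ r := fun hc => hpe (Fin.ext hc)
            omega
      · intro p q hp hq hpq
        have hpne : p ≠ rr := by intro he; rw [he, hval] at hp; omega
        have hqne : q ≠ rr := by intro he; rw [he, hval] at hq; omega
        rw [Function.update_of_ne hpne, Function.update_of_ne hqne]
        exact hT'.2 p q (by omega) (by omega) hpq
    · rw [Finset.mem_image]
      refine ⟨T' rr, ?_, ?_⟩
      · rw [allowed, Finset.mem_filter]
        constructor
        · exact (hT'.1 rr).1 (by rw [hval]; omega)
        · rw [Finset.disjoint_right]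
          intro x hxW hxS
          rw [Wof, Finset.mem_biUnion] at hxW
          obtain ⟨p, hp, hxp⟩ := hxW
          rw [Finset.mem_filter] at hp
          have hpne : p ≠ rr := by
            intro he; rw [he, hval] at hp; omega
          have hpne' : rr ≠ p := Ne.symm hpne
          have := hT'.2 rr p (by rw [hval]; omega) (by omega) hpne'
          have hxp' : x ∈ T' p := by
            rwa [Function.update_of_ne hpne] at hxp
          exact (Finset.disjoint_left.1 this) hxS hxp'
      · funext p
        by_cases hpe : p = rr
        · rw [hpe, Function.update_self]
        · rw [Function.update_of_ne hpe, Function.update_of_ne hpe]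
  · rintro ⟨T, hT, hmem⟩
    rw [Finset.mem_image] at hmem
    obtain ⟨S, hS, rfl⟩ := hmem
    rw [allowed, Finset.mem_filter] at hS
    rw [mem_gtt] at hT ⊢
    set rr : Fin k := ⟨r, hr⟩ with hrr
    have hval : (rr : ℕ) = r := by rw [hrr]
    constructor
    · intro p
      constructor
      · intro hp
        by_cases hpe : p = rr
        · rw [hpe, Function.update_self]
          exact hS.1
        · rw [Function.update_of_ne hpe]
          apply (hT.1 p).1
          have : (p : ℕ) ≠ r := fun hc => hpe (Fin.ext hc)
          omega
      · intro hp
        have hpne : p ≠ rr := by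
          intro he; rw [he, hval] at hp; omega
        rw [Function.update_of_ne hpne]
        exact (hT.1 p).2 (by omega)
    · intro p q hp hq hpq
      have hsub : ∀ p' : Fin k, (p' : ℕ) < r → T p' ⊆ Wof r T := by
        intro p' hp'
        apply Finset.subset_biUnion_of_mem
        rw [Finset.mem_filter]
        exact ⟨Finset.mem_univ _, hp'⟩
      by_cases hpe : p = rr <;> by_cases hqe : q = rr
      · exact absurd (hpe.trans hqe.symm) hpq
      · rw [hpe, Function.update_self, Function.update_of_ne hqe]
        have hq' : (q : ℕ) < r := by
          have : (q : ℕ) ≠ r := fun hc => hqe (Fin.ext hc)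
          omega
        exact Finset.disjoint_of_subset_right (hsub q hq') hS.2
      · rw [hqe, Function.update_self, Function.update_of_ne hpe]
        have hp' : (p : ℕ) < r := by
          have : (p : ℕ) ≠ r := fun hc => hpe (Fin.ext hc)
          omega
        exact (Finset.disjoint_of_subset_right (hsub p hp') hS.2).symm
      · rw [Function.update_of_ne hpe, Function.update_of_ne hqe]
        have hp' : (p : ℕ) < r := by
          have : (p : ℕ) ≠ r := fun hc => hpe (Fin.ext hc)
          omega
        have hq' : (q : ℕ) < r := by
          have : (q : ℕ) ≠ r := fun hc => hqe (Fin.ext hc)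
          omega
        exact hT.2 p q hp' hq' hpq

end ClassEFAux


open MeasureTheory ProbabilityTheory Filter Finset
open scoped ENNReal

namespace ClassEFAux

variable {n m k : ℕ}

theorem sum_AA_succ (cls : Fin k → Finset (Fin n)) (D : Measure ℝ) [IsProbabilityMeasure D]
    (hdisj : ∀ p q : Fin k, p ≠ q → Disjoint (cls p) (cls q))
    (hsupp : D ((Set.Icc (0 : ℝ) 1)ᶜ) = 0) (hatom : ∀ x : ℝ, D {x} = 0)
    (hnp : ∀ p : Fin k, (cls p).card ≤ m) {r : ℕ} (hr : r < k) :
    ∑ T ∈ gtt cls (r+1), PP n m D (AA cls (r+1) T)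
      = (∑ T ∈ gtt cls r, PP n m D (AA cls r T)) *
        ((Nat.choose (m - srr cls r) (cls ⟨r, hr⟩).card : ℝ≥0∞) *
         ((Nat.choose m (cls ⟨r, hr⟩).card : ℕ) : ℝ≥0∞)⁻¹) := by
  classical
  set rr : Fin k := ⟨r, hr⟩ with hrr
  have hval : (rr : ℕ) = r := rfl
  have himdisj : Set.PairwiseDisjoint
      ((gtt (m := m) cls r : Finset (Fin k → Finset (Fin m))) :
        Set (Fin k → Finset (Fin m)))
      (fun T => (allowed cls r hr T).image fun S => Function.update T rr S) := by
    intro T1 h1 T2 h2 hne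
    simp only [Function.onFun]
    rw [Finset.disjoint_left]
    intro T' hT1 hT2
    rw [Finset.mem_image] at hT1 hT2
    obtain ⟨S1, hS1, rfl⟩ := hT1
    obtain ⟨S2, hS2, he⟩ := hT2
    apply hne
    rw [Finset.mem_coe, mem_gtt] at h1 h2
    funext p
    by_cases hpe : p = rr
    · rw [hpe, (h1.1 rr).2 hval.ge, (h2.1 rr).2 hval.ge]
    · have hcf := congrFun he p
      rw [Function.update_of_ne hpe, Function.update_of_ne hpe] at hcf
      exact hcf.symm
  rw [gtt_succ cls r hr, Finset.sum_biUnion himdisj]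
  have hinner : ∀ T ∈ gtt (m := m) cls r,
      ∑ T' ∈ (allowed cls r hr T).image (fun S => Function.update T rr S),
        PP n m D (AA cls (r+1) T')
      = PP n m D (AA cls r T) *
        ((Nat.choose (m - srr cls r) (cls rr).card : ℝ≥0∞) *
         ((Nat.choose m (cls rr).card : ℕ) : ℝ≥0∞)⁻¹) := by
    intro T hT
    rw [Finset.sum_image (fun S1 hS1 S2 hS2 he => by
      have := congrFun he rr
      rwa [Function.update_self, Function.update_self] at this)]
    have hterm : ∀ S ∈ allowed cls r hr T,
        PP n m D (AA cls (r+1) (Function.update T rr S))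
        = PP n m D (AA cls r T) * ((Nat.choose m (cls rr).card : ℕ) : ℝ≥0∞)⁻¹ := by
      intro S hS
      rw [allowed, Finset.mem_filter] at hS
      have hset : AA cls (r+1) (Function.update T rr S)
          = AA cls r T ∩ Aev (cls rr) S := by
        rw [AA_succ cls hr, Function.update_self]
        congr 1
        apply AA_congr
        intro p hp
        have hpe : p ≠ rr := by
          intro he; rw [he, hval] at hp; omega
        rw [Function.update_of_ne hpe]
      rw [hset]
      have hJdisj : Disjoint (Jlow cls r) ((cls rr) ×ˢ (Finset.univ : Finset (Fin m))) := by
        rw [Finset.disjoint_left]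
        intro e he1 he2
        rw [Jlow, Finset.mem_product, Finset.mem_filter] at he1
        rw [Finset.mem_product] at he2
        obtain ⟨⟨_, p, hpr, hpin⟩, _⟩ := he1
        have hpne : p ≠ rr := by
          intro he; rw [he, hval] at hpr; omega
        exact (Finset.disjoint_left.1 (hdisj p rr hpne)) hpin he2.1
      rw [indep_of_local D (Jlow cls r) ((cls rr) ×ˢ Finset.univ) hJdisj
        (measurableSet_AA cls r T) (measurableSet_Aev (cls rr) S)
        (fun u u' h => local_AA cls r T u u' h)
        (fun u u' h => local_Aev (cls rr) S u u' h)]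
      rw [Aev_prob D hsupp hatom (cls rr) (hnp rr) hS.1]
    rw [Finset.sum_congr rfl hterm, Finset.sum_const, allowed_card cls r hr hT]
    rw [nsmul_eq_mul, ← mul_assoc]
    ring
  rw [Finset.sum_congr rfl hinner, ← Finset.sum_mul]

theorem filter_lt_succ (r : ℕ) (hr : r < k) :
    Finset.univ.filter (fun p : Fin k => (p : ℕ) < r + 1)
      = insert ⟨r, hr⟩ (Finset.univ.filter (fun p : Fin k => (p : ℕ) < r)) := by
  ext q
  rw [Finset.mem_insert, Finset.mem_filter, Finset.mem_filter]
  constructor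
  · rintro ⟨_, hq⟩
    rcases Nat.lt_or_ge (q : ℕ) r with h | h
    · exact Or.inr ⟨Finset.mem_univ _, h⟩
    · exact Or.inl (Fin.ext (show (q : ℕ) = r by omega))
  · rintro (rfl | ⟨_, hq⟩)
    · exact ⟨Finset.mem_univ _, Nat.lt_succ_self r⟩
    · exact ⟨Finset.mem_univ _, by omega⟩

theorem sum_AA_eq (cls : Fin k → Finset (Fin n)) (D : Measure ℝ) [IsProbabilityMeasure D]
    (hdisj : ∀ p q : Fin k, p ≠ q → Disjoint (cls p) (cls q))
    (hsupp : D ((Set.Icc (0 : ℝ) 1)ᶜ) = 0) (hatom : ∀ x : ℝ, D {x} = 0)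
    (hnp : ∀ p : Fin k, (cls p).card ≤ m) :
    ∀ r, r ≤ k →
    ∑ T ∈ gtt cls r, PP n m D (AA cls r T)
      = ∏ p ∈ Finset.univ.filter (fun p : Fin k => (p : ℕ) < r),
          ((Nat.choose (m - srr cls (p : ℕ)) (cls p).card : ℝ≥0∞) *
           ((Nat.choose m (cls p).card : ℕ) : ℝ≥0∞)⁻¹) := by
  intro r
  induction r with
  | zero =>
    intro _
    rw [gtt_zero]
    have h1 : Finset.univ.filter (fun p : Fin k => (p : ℕ) < 0) = ∅ := by
      ext q; simp
    rw [h1, Finset.prod_empty, Finset.sum_singleton, AA_zero]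
    exact measure_univ
  | succ r ih =>
    intro hrk
    have hr : r < k := by omega
    rw [sum_AA_succ cls D hdisj hsupp hatom hnp hr, ih (by omega), filter_lt_succ r hr,
      Finset.prod_insert (by simp)]
    ring

theorem sq_sum_formula (g : ℕ → ℝ) (K : ℕ) :
    ∑ i ∈ Finset.range K, g i * (2 * (∑ j ∈ Finset.range i, g j) + g i)
      = (∑ i ∈ Finset.range K, g i) ^ 2 := by
  induction K with
  | zero => simp
  | succ K ih =>
    rw [Finset.sum_range_succ, ih, Finset.sum_range_succ (f := g)]
    ring

theorem filter_sum_eq (f : Fin k → ℝ) :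
    ∀ r, r ≤ k →
    ∑ q ∈ Finset.univ.filter (fun q : Fin k => (q : ℕ) < r), f q
      = ∑ j ∈ Finset.range r, (if h : j < k then f ⟨j, h⟩ else 0) := by
  intro r
  induction r with
  | zero =>
    intro _
    have h1 : Finset.univ.filter (fun p : Fin k => (p : ℕ) < 0) = ∅ := by ext q; simp
    rw [h1]; simp
  | succ r ih =>
    intro hrk
    have hr : r < k := by omega
    rw [filter_lt_succ r hr, Finset.sum_insert (by simp), Finset.sum_range_succ, ih (by omega),
      dif_pos hr]
    ring

end ClassEFAux


open MeasureTheory ProbabilityTheory Filter Finset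
open scoped ENNReal

namespace ClassEFAux

variable {n m k : ℕ}

def Btarget (cls : Fin k → Finset (Fin n)) : Set (ESp n m) :=
  {u | ∃ Ib : Fin k → Finset (Fin m),
    (∀ p q : Fin k, p ≠ q → Disjoint (Ib p) (Ib q)) ∧
    ∀ p, (Ib p).card = (cls p).card ∧
      ∀ I' : Finset (Fin m), I'.card = (cls p).card →
        ClassEF.vval (fun i j => u (i, j)) (cls p) I' ≤
          ClassEF.vval (fun i j => u (i, j)) (cls p) (Ib p)}

theorem measurableSet_Btarget (cls : Fin k → Finset (Fin n)) :
    MeasurableSet (Btarget (m := m) cls) := by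
  have h1 : Btarget (m := m) cls = ⋃ (Ib : Fin k → Finset (Fin m)),
      ⋃ (_ : (∀ p q : Fin k, p ≠ q → Disjoint (Ib p) (Ib q)) ∧
          ∀ p, (Ib p).card = (cls p).card),
      ⋂ (p : Fin k), ⋂ (I' : Finset (Fin m)), ⋂ (_ : I'.card = (cls p).card),
        {u : ESp n m | valE (cls p) I' u ≤ valE (cls p) (Ib p) u} := by
    ext u
    simp only [Btarget, Set.mem_setOf_eq, Set.mem_iUnion, Set.mem_iInter]
    constructor
    · rintro ⟨Ib, hdisj, h⟩
      exact ⟨Ib, ⟨hdisj, fun p => (h p).1⟩, fun p I' hI' => (h p).2 I' hI'⟩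
    · rintro ⟨Ib, ⟨hdisj, hcard⟩, h⟩
      exact ⟨Ib, hdisj, fun p => ⟨hcard p, fun I' hI' => h p I' hI'⟩⟩
  rw [h1]
  exact MeasurableSet.iUnion fun Ib => MeasurableSet.iUnion fun _ =>
    MeasurableSet.iInter fun p => MeasurableSet.iInter fun I' => MeasurableSet.iInter fun _ =>
      measurableSet_le (measurable_valE (cls p) I') (measurable_valE (cls p) (Ib p))

theorem gtt_subset_Btarget (cls : Fin k → Finset (Fin n)) :
    ∀ T ∈ gtt (m := m) cls k, AA cls k T ⊆ Btarget cls := by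
  intro T hT u hu
  rw [mem_gtt] at hT
  refine ⟨T, fun p q hpq => hT.2 p q p.isLt q.isLt hpq,
    fun p => ⟨mem_Cand.1 ((hT.1 p).1 p.isLt), ?_⟩⟩
  intro I' hI'
  by_cases hIe : I' = T p
  · rw [hIe]
  · exact le_of_lt (hu p p.isLt I' (mem_Cand.2 hI') hIe)

theorem map_eq_PP {Ω : Type} [MeasurableSpace Ω] (μ : Measure Ω) [IsProbabilityMeasure μ]
    (D : Measure ℝ) [IsProbabilityMeasure D]
    (U : Fin n × Fin m → Ω → ℝ) (hmeas : ∀ e, Measurable (U e))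
    (hdist : ∀ e, μ.map (U e) = D)
    (hindep : iIndepFun (m := fun _ => (inferInstance : MeasurableSpace ℝ)) U μ) :
    μ.map (fun ω (e : Fin n × Fin m) => U e ω) = PP n m D := by
  rw [PP]
  refine (Measure.pi_eq fun s hs => ?_).symm
  have hV : Measurable (fun ω (e : Fin n × Fin m) => U e ω) := measurable_pi_lambda _ hmeas
  rw [Measure.map_apply hV (MeasurableSet.univ_pi hs)]
  have h1 : (fun ω (e : Fin n × Fin m) => U e ω) ⁻¹' (Set.pi Set.univ s)
      = ⋂ e ∈ (Finset.univ : Finset (Fin n × Fin m)), U e ⁻¹' s e := by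
    ext ω
    simp [Set.mem_pi]
  rw [h1, hindep.measure_inter_preimage_eq_mul Finset.univ (fun e _ => hs e)]
  refine Finset.prod_congr rfl fun e _ => ?_
  rw [← hdist e, Measure.map_apply (hmeas e) (hs e)]

theorem exp_le_ratio (cls : Fin k → Finset (Fin n))
    (hsum : ∑ p : Fin k, (cls p).card ≤ m)
    (hpos : 0 < (m : ℝ) -
      (∑ p ∈ Finset.univ.filter (fun p : Fin k => (p : ℕ) < k - 1), ((cls p).card : ℝ)) + 1)
    (p : Fin k) :
    Real.exp (-(((cls p).card : ℝ) * (2 * (srr cls (p : ℕ) : ℝ) + ((cls p).card : ℝ)) /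
        ((m : ℝ) -
          (∑ q ∈ Finset.univ.filter (fun q : Fin k => (q : ℕ) < k - 1),
            ((cls q).card : ℝ)) + 1)))
      ≤ (Nat.choose (m - srr cls (p : ℕ)) (cls p).card : ℝ) / (Nat.choose m (cls p).card : ℝ) := by
  classical
  set np := (cls p).card with hnp
  set sp := srr cls (p : ℕ) with hsp
  set d : ℝ := (m : ℝ) -
      (∑ q ∈ Finset.univ.filter (fun q : Fin k => (q : ℕ) < k - 1), ((cls q).card : ℝ)) + 1
    with hd
  have hnpsp : np + sp ≤ m := by
    have h1 : sp + np = ∑ q ∈ insert p (Finset.univ.filter (fun q : Fin k => (q : ℕ) < (p : ℕ))),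
        (cls q).card := by
      rw [Finset.sum_insert (by simp)]
      rw [hsp, srr, hnp]
      ring
    have h2 : ∑ q ∈ insert p (Finset.univ.filter (fun q : Fin k => (q : ℕ) < (p : ℕ))),
        (cls q).card ≤ ∑ q : Fin k, (cls q).card :=
      Finset.sum_le_sum_of_subset (Finset.subset_univ _)
    omega
  have hsp_le : (sp : ℝ) ≤ ∑ q ∈ Finset.univ.filter (fun q : Fin k => (q : ℕ) < k - 1),
      ((cls q).card : ℝ) := by
    have h1 : sp ≤ srr cls (k - 1) := by
      rw [hsp, srr, srr]
      apply Finset.sum_le_sum_of_subset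
      intro q hq
      rw [Finset.mem_filter] at hq ⊢
      have := p.isLt
      exact ⟨hq.1, by omega⟩
    have h2 : (srr cls (k-1) : ℝ) = ∑ q ∈ Finset.univ.filter (fun q : Fin k => (q : ℕ) < k - 1),
        ((cls q).card : ℝ) := by
      rw [srr, Nat.cast_sum]
    rw [← h2]
    exact_mod_cast h1
  have hd_le : d ≤ (m : ℝ) - sp + 1 := by rw [hd]; linarith
  have hcore := coreAnalytic m np sp hnpsp
  have hX : (0 : ℝ) ≤ (np : ℝ) * (2 * sp + np) := by positivity
  have ht : (np : ℝ) * (2 * sp + np) / ((m : ℝ) - sp + 1) ≤ (np : ℝ) * (2 * sp + np) / d := by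
    apply div_le_div_of_nonneg_left hX hpos hd_le
  have hcore2 : (Nat.choose m np : ℝ)
      ≤ (Nat.choose (m - sp) np : ℝ) * Real.exp ((np : ℝ) * (2 * sp + np) / d) := by
    refine le_trans hcore ?_
    apply mul_le_mul_of_nonneg_left _ (Nat.cast_nonneg _)
    rw [Real.exp_le_exp]
    calc (np : ℝ) * (2 * (sp:ℝ) + np) / ((m : ℝ) - sp + 1)
        ≤ (np : ℝ) * (2 * sp + np) / d := ht
      _ = (np : ℝ) * (2 * sp + np) / d := by ring
  have hBpos : (0 : ℝ) < (Nat.choose m np : ℝ) := by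
    exact_mod_cast Nat.choose_pos (by omega : np ≤ m)
  rw [le_div_iff₀ hBpos]
  calc Real.exp (-((np : ℝ) * (2 * (sp:ℝ) + np) / d)) * (Nat.choose m np : ℝ)
      ≤ Real.exp (-((np : ℝ) * (2 * sp + np) / d)) *
        ((Nat.choose (m - sp) np : ℝ) * Real.exp ((np : ℝ) * (2 * sp + np) / d)) := by
        apply mul_le_mul_of_nonneg_left hcore2 (le_of_lt (Real.exp_pos _))
    _ = (Nat.choose (m - sp) np : ℝ) *
        (Real.exp (-((np : ℝ) * (2 * sp + np) / d)) * Real.exp ((np : ℝ) * (2 * sp + np) / d)) := by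
        ring
    _ = (Nat.choose (m - sp) np : ℝ) := by
        rw [← Real.exp_add]
        simp

theorem final_real_bound (cls : Fin k → Finset (Fin n))
    (hsum : ∑ p : Fin k, (cls p).card ≤ m)
    (hpos : 0 < (m : ℝ) -
      (∑ p ∈ Finset.univ.filter (fun p : Fin k => (p : ℕ) < k - 1), ((cls p).card : ℝ)) + 1) :
    Real.exp (-((k : ℝ) ^ 2 * ((ClassEF.maxClassSize cls) : ℝ) ^ 2) /
        ((m : ℝ) -
          (∑ p ∈ Finset.univ.filter (fun p : Fin k => (p : ℕ) < k - 1),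
            ((cls p).card : ℝ)) + 1))
      ≤ ∏ p : Fin k, ((Nat.choose (m - srr cls (p : ℕ)) (cls p).card : ℝ) /
          (Nat.choose m (cls p).card : ℝ)) := by
  classical
  set d : ℝ := (m : ℝ) -
      (∑ q ∈ Finset.univ.filter (fun q : Fin k => (q : ℕ) < k - 1), ((cls q).card : ℝ)) + 1
    with hd
  set M : ℕ := ClassEF.maxClassSize cls with hM
  -- step 1: product of per-class exponentials
  have step1 : ∏ p : Fin k, Real.exp (-(((cls p).card : ℝ) *
        (2 * (srr cls (p : ℕ) : ℝ) + ((cls p).card : ℝ)) / d))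
      ≤ ∏ p : Fin k, ((Nat.choose (m - srr cls (p : ℕ)) (cls p).card : ℝ) /
          (Nat.choose m (cls p).card : ℝ)) := by
    apply Finset.prod_le_prod
    · intro p _; exact le_of_lt (Real.exp_pos _)
    · intro p _; exact exp_le_ratio cls hsum hpos p
  -- step 2: the sum identity
  set g : ℕ → ℝ := fun i => if h : i < k then ((cls ⟨i, h⟩).card : ℝ) else 0 with hg
  have hsrr_cast : ∀ r : ℕ, r ≤ k → (srr cls r : ℝ) = ∑ j ∈ Finset.range r, g j := by
    intro r hr
    rw [srr, Nat.cast_sum]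
    exact filter_sum_eq (fun q => ((cls q).card : ℝ)) r hr
  have hgp : ∀ p : Fin k, g (p : ℕ) = ((cls p).card : ℝ) := by
    intro p
    rw [hg]
    simp only [p.isLt, dif_pos]
  have hsum_id : ∑ p : Fin k, ((cls p).card : ℝ) *
        (2 * (srr cls (p : ℕ) : ℝ) + ((cls p).card : ℝ))
      = (∑ p : Fin k, ((cls p).card : ℝ)) ^ 2 := by
    have h1 : ∑ p : Fin k, ((cls p).card : ℝ) *
          (2 * (srr cls (p : ℕ) : ℝ) + ((cls p).card : ℝ))
        = ∑ i ∈ Finset.range k, g i * (2 * (∑ j ∈ Finset.range i, g j) + g i) := by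
      rw [← Fin.sum_univ_eq_sum_range (fun i => g i * (2 * (∑ j ∈ Finset.range i, g j) + g i)) k]
      refine Finset.sum_congr rfl fun p _ => ?_
      rw [hgp p, hsrr_cast (p : ℕ) (le_of_lt p.isLt)]
    have h2 : ∑ p : Fin k, ((cls p).card : ℝ) = ∑ i ∈ Finset.range k, g i := by
      rw [← Fin.sum_univ_eq_sum_range g k]
      exact Finset.sum_congr rfl fun p _ => (hgp p).symm
    rw [h1, h2, sq_sum_formula]
  -- step 3: bound the sum
  have hsum_le : ∑ p : Fin k, ((cls p).card : ℝ) ≤ (k : ℝ) * M := by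
    have h1 : ∀ p : Fin k, ((cls p).card : ℝ) ≤ (M : ℝ) := by
      intro p
      have : (cls p).card ≤ M := by
        rw [hM, ClassEF.maxClassSize]
        exact Finset.le_sup (f := fun q : Fin k => (cls q).card) (Finset.mem_univ p)
      exact_mod_cast this
    calc ∑ p : Fin k, ((cls p).card : ℝ) ≤ ∑ _p : Fin k, (M : ℝ) :=
        Finset.sum_le_sum fun p _ => h1 p
      _ = (k : ℝ) * M := by rw [Finset.sum_const, Finset.card_univ, Fintype.card_fin,
          nsmul_eq_mul]
  have hsum_sq : (∑ p : Fin k, ((cls p).card : ℝ)) ^ 2 ≤ (k : ℝ) ^ 2 * (M : ℝ) ^ 2 := by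
    have h0 : (0:ℝ) ≤ ∑ p : Fin k, ((cls p).card : ℝ) :=
      Finset.sum_nonneg fun p _ => Nat.cast_nonneg _
    calc (∑ p : Fin k, ((cls p).card : ℝ)) ^ 2 ≤ ((k : ℝ) * M) ^ 2 :=
        pow_le_pow_left₀ h0 hsum_le 2
      _ = (k : ℝ) ^ 2 * (M : ℝ) ^ 2 := by ring
  -- step 4: assemble
  have hexp_eq : ∏ p : Fin k, Real.exp (-(((cls p).card : ℝ) *
        (2 * (srr cls (p : ℕ) : ℝ) + ((cls p).card : ℝ)) / d))
      = Real.exp (∑ p : Fin k, -(((cls p).card : ℝ) *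
        (2 * (srr cls (p : ℕ) : ℝ) + ((cls p).card : ℝ)) / d)) := (Real.exp_sum _ _).symm
  have hfinal : Real.exp (-((k : ℝ) ^ 2 * (M : ℝ) ^ 2) / d)
      ≤ ∏ p : Fin k, Real.exp (-(((cls p).card : ℝ) *
        (2 * (srr cls (p : ℕ) : ℝ) + ((cls p).card : ℝ)) / d)) := by
    rw [hexp_eq, Real.exp_le_exp]
    have h1 : ∑ p : Fin k, -(((cls p).card : ℝ) *
          (2 * (srr cls (p : ℕ) : ℝ) + ((cls p).card : ℝ)) / d)
        = -((∑ p : Fin k, ((cls p).card : ℝ) *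
          (2 * (srr cls (p : ℕ) : ℝ) + ((cls p).card : ℝ))) / d) := by
      rw [Finset.sum_neg_distrib, Finset.sum_div]
    rw [h1, hsum_id, neg_div, neg_le_neg_iff, div_le_div_iff_of_pos_right hpos]
    exact hsum_sq
  exact le_trans hfinal step1

end ClassEFAux


open MeasureTheory ProbabilityTheory in
/-- with independent utilities drawn from a non-atomic distribution,
the probability that there exist pairwise disjoint favorite bundles, one per class,
is at least `exp(−k²·(max_p n_p)² / (m − Σ_{p=1}^{k-1} n_p + 1))`. -/
theorem stmt4 {n m k : ℕ} (cls : Fin k → Finset (Fin n))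
    (hpart : ClassEF.IsClassPartition cls)
    (D : Measure ℝ) [IsProbabilityMeasure D]
    (hsupp : D ((Set.Icc (0 : ℝ) 1)ᶜ) = 0)
    (hatom : ∀ x : ℝ, D {x} = 0)
    {Ω : Type} [MeasurableSpace Ω] (μ : Measure Ω) [IsProbabilityMeasure μ]
    (U : Fin n × Fin m → Ω → ℝ)
    (hmeas : ∀ e, Measurable (U e))
    (hdist : ∀ e, μ.map (U e) = D)
    (hindep : iIndepFun (m := fun _ => (inferInstance : MeasurableSpace ℝ)) U μ)
    (hsum : ∑ p : Fin k, (cls p).card ≤ m)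
    (hpos : 0 < (m : ℝ) -
      (∑ p ∈ Finset.univ.filter (fun p : Fin k => (p : ℕ) < k - 1), ((cls p).card : ℝ)) + 1) :
    ENNReal.ofReal
        (Real.exp (-((k : ℝ) ^ 2 * (ClassEF.maxClassSize cls : ℝ) ^ 2) /
          ((m : ℝ) -
            (∑ p ∈ Finset.univ.filter (fun p : Fin k => (p : ℕ) < k - 1),
              ((cls p).card : ℝ)) + 1))) ≤
      μ {ω | ∃ Ib : Fin k → Finset (Fin m),
        (∀ p q : Fin k, p ≠ q → Disjoint (Ib p) (Ib q)) ∧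
        ∀ p, (Ib p).card = (cls p).card ∧
          ∀ I' : Finset (Fin m), I'.card = (cls p).card →
            ClassEF.vval (fun i j => U (i, j) ω) (cls p) I' ≤
              ClassEF.vval (fun i j => U (i, j) ω) (cls p) (Ib p)} := by
  classical
  have hdisj : ∀ p q : Fin k, p ≠ q → Disjoint (cls p) (cls q) := hpart.2.1
  have hnp : ∀ p : Fin k, (cls p).card ≤ m := fun p =>
    le_trans (Finset.single_le_sum (f := fun q : Fin k => (cls q).card)
      (fun q _ => Nat.zero_le _) (Finset.mem_univ p)) hsum
  set V : Ω → ClassEFAux.ESp n m := fun ω e => U e ω with hVdef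
  have hVmeas : Measurable V := measurable_pi_lambda _ hmeas
  have hmapV : μ.map V = ClassEFAux.PP n m D := ClassEFAux.map_eq_PP μ D U hmeas hdist hindep
  have hEvent : {ω | ∃ Ib : Fin k → Finset (Fin m),
        (∀ p q : Fin k, p ≠ q → Disjoint (Ib p) (Ib q)) ∧
        ∀ p, (Ib p).card = (cls p).card ∧
          ∀ I' : Finset (Fin m), I'.card = (cls p).card →
            ClassEF.vval (fun i j => U (i, j) ω) (cls p) I' ≤
              ClassEF.vval (fun i j => U (i, j) ω) (cls p) (Ib p)}
      = V ⁻¹' (ClassEFAux.Btarget cls) := rfl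
  rw [hEvent, ← Measure.map_apply hVmeas (ClassEFAux.measurableSet_Btarget cls), hmapV]
  have hsum_T := ClassEFAux.sum_AA_eq cls D hdisj hsupp hatom hnp k le_rfl
  have hfilter : Finset.univ.filter (fun p : Fin k => (p : ℕ) < k) = Finset.univ :=
    Finset.filter_true_of_mem fun p _ => p.isLt
  rw [hfilter] at hsum_T
  have hpd : (↑(ClassEFAux.gtt (m := m) cls k) : Set (Fin k → Finset (Fin m))).PairwiseDisjoint
      (ClassEFAux.AA cls k) := by
    intro T1 h1 T2 h2 hne
    exact ClassEFAux.AA_disj cls k (Finset.mem_coe.1 h1) (Finset.mem_coe.1 h2) hne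
  have hunion : ClassEFAux.PP n m D (⋃ T ∈ ClassEFAux.gtt (m := m) cls k,
        ClassEFAux.AA cls k T)
      = ∑ T ∈ ClassEFAux.gtt (m := m) cls k, ClassEFAux.PP n m D (ClassEFAux.AA cls k T) :=
    measure_biUnion_finset hpd (fun T _ => ClassEFAux.measurableSet_AA cls k T)
  calc ENNReal.ofReal
        (Real.exp (-((k : ℝ) ^ 2 * (ClassEF.maxClassSize cls : ℝ) ^ 2) /
          ((m : ℝ) -
            (∑ p ∈ Finset.univ.filter (fun p : Fin k => (p : ℕ) < k - 1),
              ((cls p).card : ℝ)) + 1)))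
      ≤ ENNReal.ofReal (∏ p : Fin k,
          ((Nat.choose (m - ClassEFAux.srr cls (p : ℕ)) (cls p).card : ℝ) /
            (Nat.choose m (cls p).card : ℝ))) :=
        ENNReal.ofReal_le_ofReal (ClassEFAux.final_real_bound cls hsum hpos)
    _ = ∏ p : Fin k,
          ((Nat.choose (m - ClassEFAux.srr cls (p : ℕ)) (cls p).card : ℝ≥0∞) *
            ((Nat.choose m (cls p).card : ℕ) : ℝ≥0∞)⁻¹) := by
        rw [ENNReal.ofReal_prod_of_nonneg (fun p _ => by positivity)]
        refine Finset.prod_congr rfl fun p _ => ?_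
        have hB : (0 : ℝ) < (Nat.choose m (cls p).card : ℝ) := by
          exact_mod_cast Nat.choose_pos (hnp p)
        rw [ENNReal.ofReal_div_of_pos hB, ENNReal.ofReal_natCast, ENNReal.ofReal_natCast,
          div_eq_mul_inv]
    _ = ∑ T ∈ ClassEFAux.gtt (m := m) cls k, ClassEFAux.PP n m D (ClassEFAux.AA cls k T) :=
        hsum_T.symm
    _ = ClassEFAux.PP n m D (⋃ T ∈ ClassEFAux.gtt (m := m) cls k, ClassEFAux.AA cls k T) :=
        hunion.symm
    _ ≤ ClassEFAux.PP n m D (ClassEFAux.Btarget cls) := by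
        apply measure_mono
        exact Set.iUnion₂_subset (ClassEFAux.gtt_subset_Btarget cls)
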